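/- arXiv:1401.6061 — 4 statements merged into one kernel-verified Lean document; each statement's English description precedes it below -/
import Mathlib

section
/- If κ is an infinite cardinal and there is an atomless proper ideal J on κ such that Black has a winning strategy in the game G(J), then White has a winning strategy in the cut-and-choose game UG(ℵ0,κ). -/
open Cardinal Set

namespace GamePaper

universe u

/-! ### Gale–Stewart style games.
A play is a sequence `p : ℕ → M`; player ONE (resp. White) moves at even indices,
player TWO (resp. Black) at odd indices.  A strategy for a player is a function
assigning to the finite sequence of the opponent's prior moves the player's next move. -/

/-- ONE's moves in the play `p` are obtained from the strategy `σ` applied to the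
list of TWO's prior moves. -/
def OneFollows {M : Type*} (σ : List M → M) (p : ℕ → M) : Prop :=
  ∀ n : ℕ, p (2 * n) = σ (List.ofFn fun i : Fin n => p (2 * (i : ℕ) + 1))

/-- TWO's moves in the play `p` are obtained from the strategy `σ` applied to the
list of ONE's prior moves. -/
def TwoFollows {M : Type*} (σ : List M → M) (p : ℕ → M) : Prop :=
  ∀ n : ℕ, p (2 * n + 1) = σ (List.ofFn fun i : Fin (n + 1) => p (2 * (i : ℕ)))

/-- ONE has a winning strategy in the Gale–Stewart game `GS_Λ(A)`. -/
def OneWinsGS {Λ : Type*} (A : Set (ℕ → Λ)) : Prop :=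
  ∃ σ : List Λ → Λ, ∀ p : ℕ → Λ, OneFollows σ p → p ∈ A

/-- TWO has a winning strategy in the Gale–Stewart game `GS_Λ(A)`. -/
def TwoWinsGS {Λ : Type*} (A : Set (ℕ → Λ)) : Prop :=
  ∃ σ : List Λ → Λ, ∀ p : ℕ → Λ, TwoFollows σ p → p ∉ A

/-- ONE has a winning strategy in the multiboard game `GS_Λ(A, K)`:
moves are functions `K → Λ`, and ONE wins a play if on some board `ξ` the induced
play belongs to `A`. -/
def OneWinsGSBoards (Λ K : Type*) (A : Set (ℕ → Λ)) : Prop :=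
  ∃ σ : List (K → Λ) → K → Λ, ∀ q : ℕ → K → Λ, OneFollows σ q →
    ∃ ξ : K, (fun n => q n ξ) ∈ A

/-- TWO has a winning strategy in the multiboard game `GS_Λ(A, K)`. -/
def TwoWinsGSBoards (Λ K : Type*) (A : Set (ℕ → Λ)) : Prop :=
  ∃ σ : List (K → Λ) → K → Λ, ∀ q : ℕ → K → Λ, TwoFollows σ q →
    ∀ ξ : K, (fun n => q n ξ) ∉ A

/-- The multiboard Gale–Stewart game `GS_Λ(A, K)` is determined. -/
def GSBoardsDetermined (Λ K : Type*) (A : Set (ℕ → Λ)) : Prop :=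
  OneWinsGSBoards Λ K A ∨ TwoWinsGSBoards Λ K A

/-- `D(λ, κ)` : every multiboard Gale–Stewart game on `κ` boards with moves in `λ`
is determined. -/
def DProp (Λ K : Type*) : Prop :=
  ∀ A : Set (ℕ → Λ), GSBoardsDetermined Λ K A

/-! ### Laver games -/

/-- ONE wins the play `q` of the Laver game `LG(Λ, K)`. -/
def LaverWin (Λ K : Type*) (q : ℕ → K → Λ) : Prop :=
  ∀ S : Set (ℕ → Λ), ¬ TwoWinsGS S → ∃ ξ : K, (fun n => q n ξ) ∈ S

/-- `L(λ, κ)` : ONE has a winning strategy in the Laver game `LG(Λ, K)`. -/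
def OneWinsLG (Λ K : Type*) : Prop :=
  ∃ σ : List (K → Λ) → K → Λ, ∀ q : ℕ → K → Λ, OneFollows σ q → LaverWin Λ K q

/-- TWO has a winning strategy in the Laver game `LG(Λ, K)`. -/
def TwoWinsLG (Λ K : Type*) : Prop :=
  ∃ σ : List (K → Λ) → K → Λ, ∀ q : ℕ → K → Λ, TwoFollows σ q → ¬ LaverWin Λ K q

/-! ### Ulam's cut-and-choose games `UG(λ, κ)`.
White first chooses `f 0 : K → Λ`; thereafter Black chooses `(ξ (2n), f (2n+1))` and
White responds with `(ξ (2n+1), f (2n+2))`.  White wins iff for some `α : K`,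
`f n α = ξ n` for all `n`. -/

/-- A strategy for White in `UG(Λ, K)`: a first move, and a response to each finite
sequence of Black's prior moves. -/
structure UGWhiteStrategy (Λ K : Type*) where
  first : K → Λ
  move : List (Λ × (K → Λ)) → Λ × (K → Λ)

/-- White's moves in the play `(ξ, f)` of `UG(Λ, K)` follow the strategy `σ`. -/
def UGWhiteFollows {Λ K : Type*} (σ : UGWhiteStrategy Λ K) (ξ : ℕ → Λ) (f : ℕ → K → Λ) :
    Prop :=
  f 0 = σ.first ∧
  ∀ n : ℕ, (ξ (2 * n + 1), f (2 * n + 2)) =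
    σ.move (List.ofFn fun i : Fin (n + 1) => (ξ (2 * (i : ℕ)), f (2 * (i : ℕ) + 1)))

/-- `U(λ, κ)` : White has a winning strategy in the cut-and-choose game `UG(Λ, K)`. -/
def WhiteWinsUG (Λ K : Type*) : Prop :=
  ∃ σ : UGWhiteStrategy Λ K, ∀ (ξ : ℕ → Λ) (f : ℕ → K → Λ),
    UGWhiteFollows σ ξ f → ∃ α : K, ∀ n : ℕ, f n α = ξ n

/-! ### Ideals and the game `G(J)` -/

/-- `J` is an ideal of subsets: nonempty, closed under binary unions and subsets. -/
def IsIdeal {S : Type*} (J : Set (Set S)) : Prop :=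
  J.Nonempty ∧ (∀ A B : Set S, A ∈ J → B ∈ J → A ∪ B ∈ J) ∧
    ∀ A B : Set S, B ∈ J → A ⊆ B → A ∈ J

/-- `J` is atomless: every `J`-positive set splits into two disjoint `J`-positive sets. -/
def IsAtomless {S : Type*} (J : Set (Set S)) : Prop :=
  ∀ X : Set S, X ∉ J → ∃ A B : Set S, A ∪ B = X ∧ Disjoint A B ∧ A ∉ J ∧ B ∉ J

/-- Legality of White's `n`-th move in the game `G(J)` (White plays `W n`,
Black plays `B n`). -/
def GJWhiteLegal {S : Type*} (J : Set (Set S)) (W B : ℕ → Set S) : ℕ → Prop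
  | 0 => W 0 ∉ J
  | n + 1 => W (n + 1) ∉ J ∧ W (n + 1) ⊆ B n

/-- Legality of Black's `n`-th move in the game `G(J)`. -/
def GJBlackLegal {S : Type*} (J : Set (Set S)) (W B : ℕ → Set S) (n : ℕ) : Prop :=
  B n ∉ J ∧ B n ⊆ W n

/-- Black has a winning strategy in the game `G(J)`: a strategy `τ` such that in any
play in which Black follows `τ`, Black's moves are legal as long as White's have been,
and if White always moves legally then `⋂ n, B n` is nonempty. -/
def BlackWinsGJ {S : Type*} (J : Set (Set S)) : Prop :=
  ∃ τ : List (Set S) → Set S,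
    ∀ W B : ℕ → Set S,
      (∀ n : ℕ, B n = τ (List.ofFn fun i : Fin (n + 1) => W (i : ℕ))) →
      (∀ n : ℕ, (∀ k ≤ n, GJWhiteLegal J W B k) → GJBlackLegal J W B n) ∧
      ((∀ n : ℕ, GJWhiteLegal J W B n) → (⋂ n, B n).Nonempty)

/-- The ideal `J` on `K` witnesses `I(λ, κ)`: it is a proper free ideal, `λ⁺`-complete,
every positive set has a partition into `λ` many disjoint positive sets, and there is a
dense family in `J⁺` closed under countable descending intersections (nonempty). -/
def IdealWitness (Λ K : Type*) (J : Set (Set K)) : Prop :=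
  IsIdeal J ∧ J ≠ Set.univ ∧ ⋃₀ J = Set.univ ∧
  (∀ A : Λ → Set K, (∀ i, A i ∈ J) → (⋃ i, A i) ∈ J) ∧
  (∀ X : Set K, X ∉ J → ∃ P : Λ → Set K, (⋃ i, P i) = X ∧
      (∀ i j : Λ, i ≠ j → Disjoint (P i) (P j)) ∧ ∀ i, P i ∉ J) ∧
  ∃ F : Set (Set K), (∀ Y ∈ F, Y ∉ J) ∧ (∀ X : Set K, X ∉ J → ∃ Y ∈ F, Y ⊆ X) ∧
    ∀ Xs : ℕ → Set K, (∀ n, Xs n ∈ F) → (∀ n, Xs (n + 1) ⊆ Xs n) → (⋂ n, Xs n).Nonempty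

/-- `I(λ, κ)` : some ideal on `K` witnesses the above. -/
def IProp (Λ K : Type*) : Prop := ∃ J : Set (Set K), IdealWitness Λ K J

/-! ### The Banach–Mazur game and box products -/

/-- Legality of White's `n`-th move in the Banach–Mazur game (White plays the sets of
even index of the play `p`). -/
def BMWhiteLegal {X : Type*} [TopologicalSpace X] (p : ℕ → Set X) : ℕ → Prop
  | 0 => IsOpen (p 0) ∧ (p 0).Nonempty
  | n + 1 => IsOpen (p (2 * n + 2)) ∧ (p (2 * n + 2)).Nonempty ∧ p (2 * n + 2) ⊆ p (2 * n + 1)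

/-- Legality of Black's `n`-th move in the Banach–Mazur game. -/
def BMBlackLegal {X : Type*} [TopologicalSpace X] (p : ℕ → Set X) (n : ℕ) : Prop :=
  IsOpen (p (2 * n + 1)) ∧ (p (2 * n + 1)).Nonempty ∧ p (2 * n + 1) ⊆ p (2 * n)

/-- Black has a winning strategy in the Banach–Mazur game `BM(X)`: a strategy `τ` such
that in any play where Black follows `τ`, Black's moves are legal as long as White's
have been, and if White always moves legally then the intersection of the play is
nonempty. -/
def BlackWinsBM (X : Type*) [TopologicalSpace X] : Prop :=
  ∃ τ : List (Set X) → Set X,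
    ∀ p : ℕ → Set X,
      (∀ n : ℕ, p (2 * n + 1) = τ (List.ofFn fun i : Fin (n + 1) => p (2 * (i : ℕ)))) →
      (∀ n : ℕ, (∀ k ≤ n, BMWhiteLegal p k) → BMBlackLegal p n) ∧
      ((∀ n : ℕ, BMWhiteLegal p n) → (⋂ n, p n).Nonempty)

/-- The box product topology on `ι → X`: generated by boxes `∏ i, U i` with all
`U i` open. -/
def boxTopology (ι X : Type*) [TopologicalSpace X] : TopologicalSpace (ι → X) :=
  TopologicalSpace.generateFrom
    {S : Set (ι → X) | ∃ U : ι → Set X, (∀ i, IsOpen (U i)) ∧ S = Set.pi Set.univ U}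

/-- `𝓑` is a π-base for `X`: a family of nonempty open sets such that every nonempty
open set contains a member of the family. -/
def IsPiBase (X : Type*) [TopologicalSpace X] (𝓑 : Set (Set X)) : Prop :=
  (∀ V ∈ 𝓑, IsOpen V ∧ V.Nonempty) ∧
    ∀ U : Set X, IsOpen U → U.Nonempty → ∃ V ∈ 𝓑, V ⊆ U

/-! ### Interlaced sets -/

/-- `A` and `B` are interlaced: both are infinite and for some `k` the increasing
enumerations of `A \ k` and `B \ k` satisfy `a₀ < b₀ < a₁ < b₁ < ⋯`. -/
def Interlaced (A B : Set ℕ) : Prop :=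
  A.Infinite ∧ B.Infinite ∧ ∃ k : ℕ, ∀ n : ℕ,
    Nat.nth (fun m => m ∈ A ∧ k ≤ m) n < Nat.nth (fun m => m ∈ B ∧ k ≤ m) n ∧
    Nat.nth (fun m => m ∈ B ∧ k ≤ m) n < Nat.nth (fun m => m ∈ A ∧ k ≤ m) (n + 1)

/-- `B(x) = {x(2n) + x(2n+1) : n < ω, x(2n) > 0}`. -/
def Bx (x : ℕ → ℕ) : Set ℕ :=
  {m | ∃ n : ℕ, 0 < x (2 * n) ∧ m = x (2 * n) + x (2 * n + 1)}

/-- `Y(𝓑) = {x ∈ ωω : B(x) ∉ 𝓑}`. -/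
def YFam (𝓑 : Set (Set ℕ)) : Set (ℕ → ℕ) := {x | Bx x ∉ 𝓑}

/-- `B^F_i = {F(2n)(i) + F(2n+1)(i) : n < ω, F(2n)(i) > 0}` for a play `F` of `G^ω`. -/
def BF (F : ℕ → ℕ → ℕ) (i : ℕ) : Set ℕ :=
  {m | ∃ n : ℕ, 0 < F (2 * n) i ∧ m = F (2 * n) i + F (2 * n + 1) i}

/-- `D(A,B)` : `A` or `B` is finite, or for each `k` there are `a₁ < a₂ < a₃` in `A \ k`
with no element of `B` strictly between `a₁` and `a₃`. -/
def DRel (A B : Set ℕ) : Prop :=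
  A.Finite ∨ B.Finite ∨ ∀ k : ℕ, ∃ a₁ a₂ a₃ : ℕ,
    a₁ ∈ A ∧ a₂ ∈ A ∧ a₃ ∈ A ∧ k ≤ a₁ ∧ a₁ < a₂ ∧ a₂ < a₃ ∧
    ¬ ∃ b ∈ B, a₁ < b ∧ b < a₃


/-! ### Auxiliary machinery for Theorem 14 (Baumgartner) -/

section BaumgartnerAux
variable {K : Type u}

lemma ideal_univ_notMem {J : Set (Set K)} (hIdeal : IsIdeal J) (hproper : J ≠ Set.univ) :
    Set.univ ∉ J := by
  intro h
  apply hproper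
  ext A
  simp only [Set.mem_univ, iff_true]
  exact hIdeal.2.2 A Set.univ h (Set.subset_univ A)

lemma ideal_diff_pos {J : Set (Set K)} (hIdeal : IsIdeal J) {X Y : Set K}
    (hX : X ∉ J) (hY : Y ∈ J) : X \ Y ∉ J := by
  intro h
  exact hX (hIdeal.2.2 X ((X \ Y) ∪ Y) (hIdeal.2.1 _ _ h hY)
    (fun a ha => by by_cases hq : a ∈ Y <;> simp [hq, ha]))

lemma countSplit {J : Set (Set K)} (hIdeal : IsIdeal J) (hatomless : IsAtomless J)
    {X : Set K} (hX : X ∉ J) :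
    ∃ f : K → ℕ, ∀ n, {α | α ∈ X ∧ f α = n} ∉ J := by
  classical
  have hc : ∀ Y : Set K, ∃ p : Set K × Set K,
      Y ∉ J → p.1 ∪ p.2 = Y ∧ Disjoint p.1 p.2 ∧ p.1 ∉ J ∧ p.2 ∉ J := by
    intro Y
    by_cases h : Y ∉ J
    · obtain ⟨A, B, h1, h2, h3, h4⟩ := hatomless Y h
      exact ⟨(A, B), fun _ => ⟨h1, h2, h3, h4⟩⟩
    · exact ⟨(∅, ∅), fun h' => absurd h' h⟩
  choose sp hsp using hc
  set Xs : ℕ → Set K := fun n => Nat.rec X (fun _ Y => (sp Y).2) n with hXs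
  have hXsS : ∀ n, Xs (n + 1) = (sp (Xs n)).2 := fun n => rfl
  set A : ℕ → Set K := fun n => (sp (Xs n)).1 with hA
  have hpos : ∀ n, Xs n ∉ J := by
    intro n
    induction n with
    | zero => exact hX
    | succ n ih => rw [hXsS]; exact (hsp (Xs n) ih).2.2.2
  have hspn : ∀ n, A n ∪ Xs (n+1) = Xs n ∧ Disjoint (A n) (Xs (n+1)) ∧ A n ∉ J :=
    fun n => ⟨(hsp (Xs n) (hpos n)).1, (hsp (Xs n) (hpos n)).2.1, (hsp (Xs n) (hpos n)).2.2.1⟩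
  have hsubXs : ∀ n, Xs (n+1) ⊆ Xs n := fun n => by
    rw [← (hspn n).1]; exact Set.subset_union_right
  have hmono : ∀ m n, m ≤ n → Xs n ⊆ Xs m := by
    intro m n h
    induction n, h using Nat.le_induction with
    | base => exact subset_rfl
    | succ n hn ih => exact (hsubXs n).trans ih
  have hAsub : ∀ n, A n ⊆ Xs n := fun n => by
    rw [← (hspn n).1]; exact Set.subset_union_left
  have hdisj : ∀ m n, m < n → ∀ α, α ∈ A m → α ∈ A n → False := by
    intro m n hmn α h1 h2
    exact Set.disjoint_left.1 (hspn m).2.1 h1 (hmono (m+1) n hmn ((hAsub n) h2))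
  refine ⟨fun α => if h : ∃ n, α ∈ A n then h.choose else 0, ?_⟩
  intro n
  have hfib : A n ⊆ {α | α ∈ X ∧ (if h : ∃ n, α ∈ A n then h.choose else 0) = n} := by
    intro α hα
    have hex : ∃ k, α ∈ A k := ⟨n, hα⟩
    refine ⟨hmono 0 n (Nat.zero_le n) (hAsub n hα), ?_⟩
    simp only [dif_pos hex]
    rcases lt_trichotomy hex.choose n with h | h | h
    · exact (hdisj _ _ h α hex.choose_spec hα).elim
    · exact h
    · exact (hdisj _ _ h α hα hex.choose_spec).elim
  intro hmem
  exact (hspn n).2.2 (hIdeal.2.2 _ _ hmem hfib)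

open scoped Classical in
noncomputable def splitFun (J : Set (Set K)) (hIdeal : IsIdeal J) (hatomless : IsAtomless J)
    (X : Set K) : K → ℕ :=
  if h : X ∉ J then (countSplit hIdeal hatomless h).choose else fun _ => 0

lemma splitFun_spec {J : Set (Set K)} (hIdeal : IsIdeal J) (hatomless : IsAtomless J)
    {X : Set K} (hX : X ∉ J) (n : ℕ) :
    {α | α ∈ X ∧ splitFun J hIdeal hatomless X α = n} ∉ J := by
  have h1 : splitFun J hIdeal hatomless X = (countSplit hIdeal hatomless hX).choose := by
    unfold splitFun
    exact dif_pos hX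
  rw [h1]
  exact (countSplit hIdeal hatomless hX).choose_spec n

def TauWins (J : Set (Set K)) (τ : List (Set K) → Set K) : Prop :=
  ∀ W B : ℕ → Set K,
      (∀ n : ℕ, B n = τ (List.ofFn fun i : Fin (n + 1) => W (i : ℕ))) →
      (∀ n : ℕ, (∀ k ≤ n, GJWhiteLegal J W B k) → GJBlackLegal J W B n) ∧
      ((∀ n : ℕ, GJWhiteLegal J W B n) → (⋂ n, B n).Nonempty)

def GoodL (J : Set (Set K)) (τ : List (Set K) → Set K) (L : List (Set K)) : Prop :=
  (∀ i, i < L.length → L.getD i ∅ ∉ J) ∧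
  ∀ i, i + 1 < L.length → L.getD (i+1) ∅ ⊆ τ (L.take (i+1))

lemma getD_of_prefix {l l' : List (Set K)} (h : l <+: l') {i : ℕ} (hi : i < l.length) :
    l'.getD i ∅ = l.getD i ∅ := by
  obtain ⟨t, rfl⟩ := h
  exact List.getD_append l t ∅ i hi

lemma getD_append_length (L : List (Set K)) (X : Set K) (t : List (Set K)) :
    (L ++ X :: t).getD L.length ∅ = X := by
  rw [List.getD_append_right _ _ _ _ (le_refl _), Nat.sub_self]
  rfl

lemma take_eq_ofFn (L : List (Set K)) {k : ℕ} (h : k ≤ L.length) :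
    L.take k = List.ofFn (fun j : Fin k => L.getD (j : ℕ) ∅) := by
  apply List.ext_getElem
  · simp [Nat.min_eq_left h]
  · intro n h1 h2
    simp only [List.getElem_take, List.getElem_ofFn]
    rw [List.getD_eq_getElem]

lemma GoodL.black {J : Set (Set K)} {τ : List (Set K) → Set K} (hτ : TauWins J τ)
    {L : List (Set K)} (hG : GoodL J τ L) {i : ℕ} (hi : i < L.length) :
    τ (L.take (i+1)) ∉ J ∧ τ (L.take (i+1)) ⊆ L.getD i ∅ := by
  have hBt : ∀ n, n < L.length →
      τ (List.ofFn fun j : Fin (n+1) => L.getD (j : ℕ) ∅) = τ (L.take (n+1)) := by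
    intro n hn
    rw [take_eq_ofFn L (show n + 1 ≤ L.length by omega)]
  have hwhite : ∀ k, k ≤ i → GJWhiteLegal J (fun j => L.getD j ∅)
      (fun n => τ (List.ofFn fun j : Fin (n+1) => L.getD (j : ℕ) ∅)) k := by
    intro k hk
    cases k with
    | zero => exact hG.1 0 (by omega)
    | succ k =>
      refine ⟨hG.1 (k+1) (by omega), ?_⟩
      show L.getD (k+1) ∅ ⊆ τ (List.ofFn fun j : Fin (k+1) => L.getD (j : ℕ) ∅)
      rw [hBt k (by omega)]
      exact hG.2 k (by omega)
  have hbl := (hτ (fun j => L.getD j ∅)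
      (fun n => τ (List.ofFn fun j : Fin (n+1) => L.getD (j : ℕ) ∅)) (fun n => rfl)).1 i hwhite
  simp only [GJBlackLegal] at hbl
  rw [hBt i hi] at hbl
  exact hbl

lemma GoodL.tau {J : Set (Set K)} {τ : List (Set K) → Set K} (hτ : TauWins J τ)
    {L : List (Set K)} (hG : GoodL J τ L) (hne : L ≠ []) :
    τ L ∉ J := by
  have hlen : 0 < L.length := List.length_pos_iff.2 hne
  have h := GoodL.black hτ hG (i := L.length - 1) (by omega)
  rw [Nat.sub_add_cancel hlen, List.take_length] at h
  exact h.1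

lemma GoodL.append {J : Set (Set K)} {τ : List (Set K) → Set K}
    {L : List (Set K)} (hG : GoodL J τ L) {X : Set K}
    (hX : X ∉ J) (hsub : X ⊆ τ L) : GoodL J τ (L ++ [X]) := by
  constructor
  · intro i hi
    rw [List.length_append, List.length_singleton] at hi
    rcases lt_or_eq_of_le (Nat.lt_succ_iff.1 hi) with h | h
    · rw [List.getD_append _ _ _ _ h]; exact hG.1 i h
    · subst h
      rw [getD_append_length]; exact hX
  · intro i hi
    rw [List.length_append, List.length_singleton] at hi
    have h2 : i + 1 ≤ L.length := by omega
    rw [List.take_append_of_le_length h2]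
    rcases lt_or_eq_of_le h2 with h | h
    · rw [List.getD_append _ _ _ _ h]; exact hG.2 i h
    · rw [h, getD_append_length, List.take_length]
      exact hsub

def extL (τ : List (Set K) → Set K) (g : K → ℕ) (L : List (Set K)) : ℕ → List (Set K)
  | 0 => L
  | m + 1 => extL τ g L m ++ [τ (extL τ g L m) ∩ {α | g α ≠ m}]

lemma extL_zero (τ : List (Set K) → Set K) (g : K → ℕ) (L : List (Set K)) :
    extL τ g L 0 = L := rfl

lemma extL_length (τ : List (Set K) → Set K) (g : K → ℕ) (L : List (Set K)) :
    ∀ m, (extL τ g L m).length = L.length + m := by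
  intro m
  induction m with
  | zero => rfl
  | succ m ih => simp only [extL, List.length_append, List.length_singleton, ih]; omega

lemma extL_prefix (τ : List (Set K) → Set K) (g : K → ℕ) (L : List (Set K))
    {m m' : ℕ} (h : m ≤ m') : extL τ g L m <+: extL τ g L m' := by
  induction m', h using Nat.le_induction with
  | base => exact List.prefix_rfl
  | succ n hn ih => exact ih.trans (List.prefix_append _ _)

lemma extL_good {J : Set (Set K)} {τ : List (Set K) → Set K} (hτ : TauWins J τ)
    (hIdeal : IsIdeal J) {g : K → ℕ} {L : List (Set K)}
    (hG : GoodL J τ L) (hne : L ≠ []) (m : ℕ)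
    (hall : ∀ k, k < m → ∀ n, {α | α ∈ τ (extL τ g L k) ∧ g α = n} ∈ J) :
    GoodL J τ (extL τ g L m) ∧ extL τ g L m ≠ [] := by
  induction m with
  | zero => exact ⟨hG, hne⟩
  | succ m ih =>
    obtain ⟨hGm, hnem⟩ := ih (fun k hk n => hall k (by omega) n)
    have htau := GoodL.tau hτ hGm hnem
    have hfib := hall m (by omega) m
    have hset : τ (extL τ g L m) ∩ {α | g α ≠ m}
        = τ (extL τ g L m) \ {α | α ∈ τ (extL τ g L m) ∧ g α = m} := by
      ext α
      simp only [Set.mem_inter_iff, Set.mem_setOf_eq, Set.mem_diff]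
      tauto
    have hpos : τ (extL τ g L m) ∩ {α | g α ≠ m} ∉ J := by
      rw [hset]; exact ideal_diff_pos hIdeal htau hfib
    exact ⟨GoodL.append hGm hpos Set.inter_subset_left, by simp [extL]⟩

lemma extSearch {J : Set (Set K)} {τ : List (Set K) → Set K} (hτ : TauWins J τ)
    (hIdeal : IsIdeal J) (g : K → ℕ) {L : List (Set K)}
    (hG : GoodL J τ L) (hne : L ≠ []) :
    ∃ m n : ℕ, {α | α ∈ τ (extL τ g L m) ∧ g α = n} ∉ J := by
  by_contra hcon
  push_neg at hcon
  have hgood : ∀ m, GoodL J τ (extL τ g L m) ∧ extL τ g L m ≠ [] :=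
    fun m => extL_good hτ hIdeal hG hne m (fun k _ n => hcon k n)
  have hlpos : 0 < L.length := List.length_pos_iff.2 hne
  set W : ℕ → Set K := fun i => (extL τ g L (i+1)).getD i ∅ with hWdef
  have hWc : ∀ m i, i < L.length + m → (extL τ g L m).getD i ∅ = W i := by
    intro m i hi
    rcases le_total m (i+1) with h | h
    · exact (getD_of_prefix (extL_prefix τ g L h) (by rw [extL_length]; exact hi)).symm
    · exact getD_of_prefix (extL_prefix τ g L h) (by rw [extL_length]; omega)
  have hBt : ∀ m i, i < L.length + m →
      τ (List.ofFn fun j : Fin (i+1) => W (j : ℕ)) = τ ((extL τ g L m).take (i+1)) := by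
    intro m i hi
    have hfun : (fun j : Fin (i+1) => (extL τ g L m).getD (j : ℕ) ∅)
        = (fun j : Fin (i+1) => W (j : ℕ)) := by
      funext j
      exact hWc m (j : ℕ) (by omega)
    rw [take_eq_ofFn (extL τ g L m) (k := i+1) (by rw [extL_length]; omega), hfun]
  have hwhite : ∀ i, GJWhiteLegal J W (fun n => τ (List.ofFn fun j : Fin (n+1) => W (j : ℕ))) i := by
    intro i
    cases i with
    | zero =>
      show W 0 ∉ J
      rw [← hWc 1 0 (by omega)]
      exact (hgood 1).1.1 0 (by rw [extL_length]; omega)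
    | succ i =>
      refine ⟨?_, ?_⟩
      · rw [← hWc (i+2) (i+1) (by omega)]
        exact (hgood (i+2)).1.1 (i+1) (by rw [extL_length]; omega)
      · show W (i+1) ⊆ τ (List.ofFn fun j : Fin (i+1) => W (j : ℕ))
        rw [← hWc (i+2) (i+1) (by omega), hBt (i+2) i (by omega)]
        exact (hgood (i+2)).1.2 i (by rw [extL_length]; omega)
  have hkey := hτ W (fun n => τ (List.ofFn fun j : Fin (n+1) => W (j : ℕ))) (fun n => rfl)
  obtain ⟨α, hα⟩ := hkey.2 hwhite
  have hαW : ∀ n, α ∈ W n := by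
    intro n
    have hbl := hkey.1 n (fun k _ => hwhite k)
    exact hbl.2 (Set.mem_iInter.1 hα n)
  have hg : ∀ m, g α ≠ m := by
    intro m
    have h1 : α ∈ W (L.length + m) := hαW _
    rw [← hWc (m+1) (L.length + m) (by omega)] at h1
    have h3 : (extL τ g L (m+1)).getD (L.length + m) ∅
        = τ (extL τ g L m) ∩ {α | g α ≠ m} := by
      show (extL τ g L m ++ [τ (extL τ g L m) ∩ {α | g α ≠ m}]).getD (L.length + m) ∅ = _
      rw [show L.length + m = (extL τ g L m).length from (extL_length τ g L m).symm]
      exact getD_append_length _ _ _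
    rw [h3] at h1
    exact h1.2
  exact hg (g α) rfl

open scoped Classical in
noncomputable def pickM (J : Set (Set K)) (τ : List (Set K) → Set K) (g : K → ℕ)
    (L : List (Set K)) : ℕ :=
  if h : ∃ m : ℕ, ∃ n : ℕ, {α | α ∈ τ (extL τ g L m) ∧ g α = n} ∉ J then Nat.find h else 0

open scoped Classical in
noncomputable def pickN (J : Set (Set K)) (τ : List (Set K) → Set K) (g : K → ℕ)
    (L : List (Set K)) : ℕ :=
  if h : ∃ n : ℕ, {α | α ∈ τ (extL τ g L (pickM J τ g L)) ∧ g α = n} ∉ J then Nat.find h else 0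

lemma pick_spec {J : Set (Set K)} {τ : List (Set K) → Set K} {g : K → ℕ} {L : List (Set K)}
    (h : ∃ m : ℕ, ∃ n : ℕ, {α | α ∈ τ (extL τ g L m) ∧ g α = n} ∉ J) :
    {α | α ∈ τ (extL τ g L (pickM J τ g L)) ∧ g α = pickN J τ g L} ∉ J ∧
    ∀ k, k < pickM J τ g L → ∀ n, {α | α ∈ τ (extL τ g L k) ∧ g α = n} ∈ J := by
  classical
  have hM : pickM J τ g L = Nat.find h := by unfold pickM; exact dif_pos h
  have h2 : ∃ n : ℕ, {α | α ∈ τ (extL τ g L (pickM J τ g L)) ∧ g α = n} ∉ J := by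
    rw [hM]; exact Nat.find_spec h
  have hN : pickN J τ g L = Nat.find h2 := by unfold pickN; exact dif_pos h2
  constructor
  · rw [hN]; exact Nat.find_spec h2
  · intro k hk n
    by_contra hx
    rw [hM] at hk
    exact Nat.find_min h hk ⟨n, hx⟩

noncomputable def L1of (J : Set (Set K)) (hIdeal : IsIdeal J) (hatomless : IsAtomless J)
    (τ : List (Set K) → Set K) (L : List (Set K)) (p : ℕ × (K → ℕ)) : List (Set K) :=
  L ++ [{α | α ∈ τ L ∧ splitFun J hIdeal hatomless (τ L) α = p.1}]

noncomputable def ansN (J : Set (Set K)) (hIdeal : IsIdeal J) (hatomless : IsAtomless J)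
    (τ : List (Set K) → Set K) (L : List (Set K)) (p : ℕ × (K → ℕ)) : ℕ :=
  pickN J τ p.2 (L1of J hIdeal hatomless τ L p)

noncomputable def stepL (J : Set (Set K)) (hIdeal : IsIdeal J) (hatomless : IsAtomless J)
    (τ : List (Set K) → Set K) (L : List (Set K)) (p : ℕ × (K → ℕ)) : List (Set K) :=
  extL τ p.2 (L1of J hIdeal hatomless τ L p) (pickM J τ p.2 (L1of J hIdeal hatomless τ L p)) ++
    [{α | α ∈ τ (extL τ p.2 (L1of J hIdeal hatomless τ L p)
        (pickM J τ p.2 (L1of J hIdeal hatomless τ L p))) ∧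
      p.2 α = ansN J hIdeal hatomless τ L p}]

lemma stepL_good {J : Set (Set K)} {τ : List (Set K) → Set K} (hτ : TauWins J τ)
    (hIdeal : IsIdeal J) (hatomless : IsAtomless J) {L : List (Set K)} (p : ℕ × (K → ℕ))
    (hG : GoodL J τ L) (hne : L ≠ []) :
    GoodL J τ (stepL J hIdeal hatomless τ L p) ∧ stepL J hIdeal hatomless τ L p ≠ [] ∧
    L <+: stepL J hIdeal hatomless τ L p ∧
    L.length + 2 ≤ (stepL J hIdeal hatomless τ L p).length := by
  have htau := GoodL.tau hτ hG hne
  have hfib : {α | α ∈ τ L ∧ splitFun J hIdeal hatomless (τ L) α = p.1} ∉ J :=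
    splitFun_spec hIdeal hatomless htau p.1
  have hfsub : {α | α ∈ τ L ∧ splitFun J hIdeal hatomless (τ L) α = p.1} ⊆ τ L :=
    fun α hα => hα.1
  have hG1 : GoodL J τ (L1of J hIdeal hatomless τ L p) := GoodL.append hG hfib hfsub
  have hne1 : L1of J hIdeal hatomless τ L p ≠ [] := by simp [L1of]
  have hex := extSearch hτ hIdeal p.2 hG1 hne1
  obtain ⟨hfib2, hmin⟩ := pick_spec hex
  obtain ⟨hGm, hnem⟩ := extL_good hτ hIdeal hG1 hne1 _ hmin
  have hsub2 : {α | α ∈ τ (extL τ p.2 (L1of J hIdeal hatomless τ L p)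
        (pickM J τ p.2 (L1of J hIdeal hatomless τ L p))) ∧
      p.2 α = ansN J hIdeal hatomless τ L p} ⊆
      τ (extL τ p.2 (L1of J hIdeal hatomless τ L p)
        (pickM J τ p.2 (L1of J hIdeal hatomless τ L p))) := fun α hα => hα.1
  refine ⟨GoodL.append hGm hfib2 hsub2, by simp [stepL], ?_, ?_⟩
  · have h1 : L <+: L1of J hIdeal hatomless τ L p := List.prefix_append _ _
    have h2 := extL_prefix τ p.2 (L1of J hIdeal hatomless τ L p)
      (Nat.zero_le (pickM J τ p.2 (L1of J hIdeal hatomless τ L p)))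
    exact (h1.trans h2).trans (List.prefix_append _ _)
  · show L.length + 2 ≤ (extL τ p.2 (L1of J hIdeal hatomless τ L p) _ ++ [_]).length
    rw [List.length_append, List.length_singleton, extL_length]
    simp only [L1of, List.length_append, List.length_singleton]
    omega

lemma stepL_getD_first {J : Set (Set K)} (hIdeal : IsIdeal J) (hatomless : IsAtomless J)
    (τ : List (Set K) → Set K) (L : List (Set K)) (p : ℕ × (K → ℕ)) :
    (stepL J hIdeal hatomless τ L p).getD L.length ∅
      = {α | α ∈ τ L ∧ splitFun J hIdeal hatomless (τ L) α = p.1} := by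
  obtain ⟨t, ht⟩ := extL_prefix τ p.2 (L1of J hIdeal hatomless τ L p)
    (Nat.zero_le (pickM J τ p.2 (L1of J hIdeal hatomless τ L p)))
  have hstep : stepL J hIdeal hatomless τ L p
      = L ++ {α | α ∈ τ L ∧ splitFun J hIdeal hatomless (τ L) α = p.1} ::
        (t ++ [{α | α ∈ τ (extL τ p.2 (L1of J hIdeal hatomless τ L p)
            (pickM J τ p.2 (L1of J hIdeal hatomless τ L p))) ∧
          p.2 α = ansN J hIdeal hatomless τ L p}]) := by
    show extL τ p.2 (L1of J hIdeal hatomless τ L p) _ ++ [_] = _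
    rw [← ht]
    simp [L1of, extL_zero, List.append_assoc]
  rw [hstep, getD_append_length]

lemma stepL_last {J : Set (Set K)} (hIdeal : IsIdeal J) (hatomless : IsAtomless J)
    (τ : List (Set K) → Set K) (L : List (Set K)) (p : ℕ × (K → ℕ)) :
    ∃ i : ℕ, L.length ≤ i ∧ i + 1 = (stepL J hIdeal hatomless τ L p).length ∧
      (stepL J hIdeal hatomless τ L p).getD i ∅ ⊆
        {α | p.2 α = ansN J hIdeal hatomless τ L p} := by
  refine ⟨(extL τ p.2 (L1of J hIdeal hatomless τ L p)
      (pickM J τ p.2 (L1of J hIdeal hatomless τ L p))).length, ?_, ?_, ?_⟩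
  · rw [extL_length]; simp [L1of]; omega
  · show _ = (extL τ p.2 (L1of J hIdeal hatomless τ L p) _ ++ [_]).length
    rw [List.length_append, List.length_singleton]
  · show (extL τ p.2 (L1of J hIdeal hatomless τ L p) _ ++ _ :: []).getD _ ∅ ⊆ _
    rw [getD_append_length]
    exact fun α hα => hα.2

noncomputable def rounds (J : Set (Set K)) (hIdeal : IsIdeal J) (hatomless : IsAtomless J)
    (τ : List (Set K) → Set K) (l : List (ℕ × (K → ℕ))) : List (Set K) :=
  l.foldl (stepL J hIdeal hatomless τ) [Set.univ]

noncomputable def whiteStrat (J : Set (Set K)) (hIdeal : IsIdeal J) (hatomless : IsAtomless J)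
    (τ : List (Set K) → Set K) : UGWhiteStrategy ℕ K where
  first := splitFun J hIdeal hatomless (τ [Set.univ])
  move := fun l =>
    (ansN J hIdeal hatomless τ (rounds J hIdeal hatomless τ l.dropLast)
        (l.getLastD (0, fun _ => 0)),
      splitFun J hIdeal hatomless (τ (rounds J hIdeal hatomless τ l)))

lemma whiteStrat_first (J : Set (Set K)) (hIdeal : IsIdeal J) (hatomless : IsAtomless J)
    (τ : List (Set K) → Set K) :
    (whiteStrat J hIdeal hatomless τ).first = splitFun J hIdeal hatomless (τ [Set.univ]) := rfl

lemma whiteStrat_move (J : Set (Set K)) (hIdeal : IsIdeal J) (hatomless : IsAtomless J)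
    (τ : List (Set K) → Set K) (l : List (ℕ × (K → ℕ))) :
    (whiteStrat J hIdeal hatomless τ).move l
      = (ansN J hIdeal hatomless τ (rounds J hIdeal hatomless τ l.dropLast)
          (l.getLastD (0, fun _ => 0)),
        splitFun J hIdeal hatomless (τ (rounds J hIdeal hatomless τ l))) := rfl

end BaumgartnerAux

/-- Theorem (Baumgartner, paper Thm 14): if there is an atomless proper ideal `J` on the
infinite cardinal `κ` such that Black has a winning strategy in `G(J)`, then White has
a winning strategy in `UG(ℵ₀,κ)`. -/
theorem statement_9 (K : Type u) [Infinite K] (J : Set (Set K))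
    (hIdeal : IsIdeal J) (hproper : J ≠ Set.univ) (hatomless : IsAtomless J)
    (hBlack : BlackWinsGJ J) : WhiteWinsUG ℕ K := by
  classical
  obtain ⟨τ, hτ⟩ := hBlack
  have hτ' : TauWins J τ := hτ
  refine ⟨whiteStrat J hIdeal hatomless τ, ?_⟩
  intro ξ f hfol
  have hblist : ∀ n : ℕ, (List.ofFn fun i : Fin (n+1) => (ξ (2*(i:ℕ)), f (2*(i:ℕ)+1)))
      = (List.ofFn fun i : Fin n => (ξ (2*(i:ℕ)), f (2*(i:ℕ)+1))) ++ [(ξ (2*n), f (2*n+1))] := by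
    intro n
    rw [List.ofFn_succ']
    simp [List.concat_eq_append]
  have hmv : ∀ n : ℕ,
      ξ (2*n+1) = ansN J hIdeal hatomless τ
          (rounds J hIdeal hatomless τ
            (List.ofFn fun i : Fin n => (ξ (2*(i:ℕ)), f (2*(i:ℕ)+1))))
          (ξ (2*n), f (2*n+1)) ∧
      f (2*n+2) = splitFun J hIdeal hatomless
          (τ (rounds J hIdeal hatomless τ
            (List.ofFn fun i : Fin (n+1) => (ξ (2*(i:ℕ)), f (2*(i:ℕ)+1))))) := by
    intro n
    have h := hfol.2 n
    rw [hblist n] at h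
    simp only [whiteStrat_move, List.dropLast_concat, List.getLastD_concat] at h
    constructor
    · exact congrArg Prod.fst h
    · rw [hblist n]
      exact congrArg Prod.snd h
  obtain ⟨Ls, hL0, hLs, hfeven, hxiodd⟩ :
      ∃ Ls : ℕ → List (Set K),
        Ls 0 = [Set.univ] ∧
        (∀ n, Ls (n+1) = stepL J hIdeal hatomless τ (Ls n) (ξ (2*n), f (2*n+1))) ∧
        (∀ n, f (2*n) = splitFun J hIdeal hatomless (τ (Ls n))) ∧
        (∀ n, ξ (2*n+1) = ansN J hIdeal hatomless τ (Ls n) (ξ (2*n), f (2*n+1))) := by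
    refine ⟨fun n => rounds J hIdeal hatomless τ
        (List.ofFn fun i : Fin n => (ξ (2*(i:ℕ)), f (2*(i:ℕ)+1))), ?_, ?_, ?_, ?_⟩
    · simp [rounds]
    · intro n
      simp only []
      rw [hblist n, rounds, rounds, List.foldl_append]
      simp
    · intro n
      cases n with
      | zero =>
        have h0 := hfol.1
        rw [whiteStrat_first] at h0
        simpa [rounds] using h0
      | succ n =>
        have h := (hmv n).2
        have he : 2*(n+1) = 2*n+2 := by ring
        rw [he]
        exact h
    · intro n
      exact (hmv n).1
  have hGinit : GoodL J τ [Set.univ] := by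
    constructor
    · intro i hi
      simp only [List.length_singleton] at hi
      have hi0 : i = 0 := by omega
      subst hi0
      simpa using ideal_univ_notMem hIdeal hproper
    · intro i hi
      simp only [List.length_singleton] at hi
      omega
  have hgood : ∀ n, GoodL J τ (Ls n) ∧ Ls n ≠ [] := by
    intro n
    induction n with
    | zero => rw [hL0]; exact ⟨hGinit, by simp⟩
    | succ n ih =>
      rw [hLs n]
      have h := stepL_good hτ' hIdeal hatomless (ξ (2*n), f (2*n+1)) ih.1 ih.2
      exact ⟨h.1, h.2.1⟩
  have hpref : ∀ n, Ls n <+: Ls (n+1) := by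
    intro n
    rw [hLs n]
    exact (stepL_good hτ' hIdeal hatomless _ (hgood n).1 (hgood n).2).2.2.1
  have hlen2 : ∀ n, (Ls n).length + 2 ≤ (Ls (n+1)).length := by
    intro n
    conv_rhs => rw [hLs n]
    exact (stepL_good hτ' hIdeal hatomless _ (hgood n).1 (hgood n).2).2.2.2
  have hprefm : ∀ m n, m ≤ n → Ls m <+: Ls n := by
    intro m n h
    induction n, h using Nat.le_induction with
    | base => exact List.prefix_rfl
    | succ n hn ih => exact ih.trans (hpref n)
  have hlen : ∀ n, n + 1 ≤ (Ls n).length := by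
    intro n
    induction n with
    | zero => rw [hL0]; simp
    | succ n ih => have := hlen2 n; omega
  set W : ℕ → Set K := fun i => (Ls (i+1)).getD i ∅ with hW
  have hWc : ∀ n i, i < (Ls n).length → (Ls n).getD i ∅ = W i := by
    intro n i hi
    rcases le_total n (i+1) with h | h
    · exact (getD_of_prefix (hprefm n (i+1) h) hi).symm
    · exact getD_of_prefix (hprefm (i+1) n h) (by have := hlen (i+1); omega)
  have hBt : ∀ n i, i < (Ls n).length →
      τ (List.ofFn fun j : Fin (i+1) => W (j : ℕ)) = τ ((Ls n).take (i+1)) := by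
    intro n i hi
    have hfun : (fun j : Fin (i+1) => (Ls n).getD (j : ℕ) ∅)
        = (fun j : Fin (i+1) => W (j : ℕ)) := by
      funext j
      exact hWc n (j : ℕ) (by omega)
    rw [take_eq_ofFn (Ls n) (k := i+1) (by omega), hfun]
  have hwhite : ∀ i, GJWhiteLegal J W
      (fun n => τ (List.ofFn fun j : Fin (n+1) => W (j : ℕ))) i := by
    intro i
    cases i with
    | zero =>
      show W 0 ∉ J
      rw [← hWc 1 0 (by have := hlen 1; omega)]
      exact (hgood 1).1.1 0 (by have := hlen 1; omega)
    | succ i =>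
      refine ⟨?_, ?_⟩
      · rw [← hWc (i+2) (i+1) (by have := hlen (i+2); omega)]
        exact (hgood (i+2)).1.1 (i+1) (by have := hlen (i+2); omega)
      · show W (i+1) ⊆ τ (List.ofFn fun j : Fin (i+1) => W (j : ℕ))
        rw [← hWc (i+2) (i+1) (by have := hlen (i+2); omega),
          hBt (i+2) i (by have := hlen (i+2); omega)]
        exact (hgood (i+2)).1.2 i (by have := hlen (i+2); omega)
  have hkey := hτ' W (fun n => τ (List.ofFn fun j : Fin (n+1) => W (j : ℕ))) (fun n => rfl)
  obtain ⟨α, hα⟩ := hkey.2 hwhite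
  have hαW : ∀ n, α ∈ W n := by
    intro n
    exact (hkey.1 n (fun k _ => hwhite k)).2 (Set.mem_iInter.1 hα n)
  refine ⟨α, ?_⟩
  intro k
  rcases Nat.even_or_odd k with ⟨n, hk⟩ | ⟨n, hk⟩
  · have hk2 : k = 2*n := by omega
    subst hk2
    have hfirst := stepL_getD_first hIdeal hatomless τ (Ls n) (ξ (2*n), f (2*n+1))
    rw [← hLs n] at hfirst
    have hi : (Ls n).length < (Ls (n+1)).length := by have := hlen2 n; omega
    have h2 : α ∈ W (Ls n).length := hαW _
    rw [← hWc (n+1) (Ls n).length hi, hfirst] at h2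
    have h3 := h2.2
    rw [← hfeven n] at h3
    exact h3
  · have hk2 : k = 2*n+1 := by omega
    subst hk2
    obtain ⟨i, hiL, hilen, hsub⟩ := stepL_last hIdeal hatomless τ (Ls n) (ξ (2*n), f (2*n+1))
    rw [← hLs n] at hilen hsub
    have hilt : i < (Ls (n+1)).length := by omega
    have h2 : α ∈ W i := hαW i
    rw [← hWc (n+1) i hilt] at h2
    have h3 := hsub h2
    rw [← hxiodd n] at h3
    exact h3

end GamePaper
end

section
/- For infinite cardinals κ and λ, I(λ,κ) implies U(λ,κ): if there is a free proper λ⁺-complete ideal J on κ such that each X ∈ J⁺ has a partition into λ pairwise disjoint sets each in J⁺, and there is a dense family F ⊆ J⁺ such that every descending ω-sequence of sets from F has nonempty intersection, then White has a winning strategy in the cut-and-choose game UG(λ,κ). -/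
open Cardinal Set

namespace GamePaper

universe u

section AuxStrat

variable {Λ K : Type u} [Nonempty Λ] [Nonempty K]

open Classical in
/-- Auxiliary: the function whose fibers refine the partition `Pp X` of `X`. -/
noncomputable def auxFib (Pp : Set K → Λ → Set K) (X : Set K) (α : K) : Λ :=
  if h : ∃ i, α ∈ Pp X i then h.choose else Classical.arbitrary Λ

/-- Auxiliary: one step of White's bookkeeping after a Black move. -/
noncomputable def auxStep (Pp : Set K → Λ → Set K) (pick : Set K → (K → Λ) → Λ)
    (den : Set K → Set K) (X : Set K) (b : Λ × (K → Λ)) : Set K :=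
  den ((X ∩ auxFib Pp X ⁻¹' {b.1}) ∩
    b.2 ⁻¹' {pick (X ∩ auxFib Pp X ⁻¹' {b.1}) b.2})

/-- Auxiliary: White's state after a finite sequence of Black moves. -/
noncomputable def auxState (Pp : Set K → Λ → Set K) (pick : Set K → (K → Λ) → Λ)
    (den : Set K → Set K) (l : List (Λ × (K → Λ))) : Set K :=
  l.foldl (auxStep Pp pick den) Set.univ

/-- Auxiliary: White's strategy. -/
noncomputable def auxStrat (Pp : Set K → Λ → Set K) (pick : Set K → (K → Λ) → Λ)
    (den : Set K → Set K) : UGWhiteStrategy Λ K where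
  first := auxFib Pp Set.univ
  move l :=
    let X := auxState Pp pick den l.dropLast
    let b := l.getLast?.getD (Classical.arbitrary _)
    (pick (X ∩ auxFib Pp X ⁻¹' {b.1}) b.2, auxFib Pp (auxState Pp pick den l))

end AuxStrat

/-- Theorem (Laver, paper Thm 19): for infinite cardinals `λ` and `κ`, `I(λ,κ)`
implies `U(λ,κ)`. -/
theorem statement_11 (Λ K : Type u) [Infinite Λ] [Infinite K]
    (hI : IProp Λ K) : WhiteWinsUG Λ K := by
  classical
  obtain ⟨J, ⟨hNE, hUn, hSubJ⟩, hProper, _hFree, hComp, hPart, F, hFpos, hFdense, hFdesc⟩ := hI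
  have hUniv : (Set.univ : Set K) ∉ J := by
    intro h
    exact hProper (Set.eq_univ_of_forall fun A => hSubJ A Set.univ h (Set.subset_univ A))
  -- choice functions
  have hP' : ∀ X : Set K, ∃ P : Λ → Set K, X ∉ J →
      (⋃ i, P i) = X ∧ (∀ i j, i ≠ j → Disjoint (P i) (P j)) ∧ ∀ i, P i ∉ J := by
    intro X
    by_cases h : X ∉ J
    · obtain ⟨P, hP⟩ := hPart X h; exact ⟨P, fun _ => hP⟩
    · exact ⟨fun _ => ∅, fun h' => absurd h' h⟩
  choose Pp hPp using hP'
  have hpick' : ∀ (X : Set K) (g : K → Λ), ∃ ζ : Λ, X ∉ J → X ∩ g ⁻¹' {ζ} ∉ J := by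
    intro X g
    by_cases h : X ∉ J
    · by_contra hcon
      push_neg at hcon
      have hall : ∀ ζ : Λ, X ∩ g ⁻¹' {ζ} ∈ J := fun ζ => (hcon ζ).2
      have hU : (⋃ ζ : Λ, X ∩ g ⁻¹' {ζ}) ∈ J := hComp _ hall
      have hXsub : X ⊆ ⋃ ζ : Λ, X ∩ g ⁻¹' {ζ} := by
        intro α hα
        exact Set.mem_iUnion.2 ⟨g α, hα, rfl⟩
      exact h (hSubJ _ _ hU hXsub)
    · exact ⟨Classical.arbitrary Λ, fun h' => absurd h' h⟩
  choose pick hpick using hpick'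
  have hden' : ∀ X : Set K, ∃ Y : Set K, X ∉ J → Y ∈ F ∧ Y ⊆ X := by
    intro X
    by_cases h : X ∉ J
    · obtain ⟨Y, hY1, hY2⟩ := hFdense X h; exact ⟨Y, fun _ => ⟨hY1, hY2⟩⟩
    · exact ⟨∅, fun h' => absurd h' h⟩
  choose den hden using hden'
  -- basic fiber facts
  have hfib : ∀ X : Set K, X ∉ J → ∀ i : Λ, Pp X i ⊆ auxFib Pp X ⁻¹' {i} := by
    intro X hX i α hα
    have hex : ∃ j, α ∈ Pp X j := ⟨i, hα⟩
    have hch : α ∈ Pp X hex.choose := hex.choose_spec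
    have : hex.choose = i := by
      by_contra hne
      exact Set.disjoint_left.1 ((hPp X hX).2.1 _ _ hne) hch hα
    have hval : auxFib Pp X α = i := by
      rw [auxFib, dif_pos hex]; exact this
    simp [hval]
  have hfibpos : ∀ X : Set K, X ∉ J → ∀ i : Λ, X ∩ auxFib Pp X ⁻¹' {i} ∉ J := by
    intro X hX i hmem
    refine (hPp X hX).2.2 i (hSubJ _ _ hmem ?_)
    intro α hα
    refine ⟨?_, hfib X hX i hα⟩
    rw [← (hPp X hX).1]
    exact Set.mem_iUnion.2 ⟨i, hα⟩
  refine ⟨auxStrat Pp pick den, ?_⟩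
  rintro ξ f ⟨hfirst, hmove⟩
  set L : ℕ → List (Λ × (K → Λ)) := fun n => List.ofFn fun i : Fin n => (ξ (2 * i), f (2 * i + 1))
    with hL
  set Xs : ℕ → Set K := fun n => auxState Pp pick den (L n) with hXs
  have hLsucc : ∀ n, L (n + 1) = L n ++ [(ξ (2 * n), f (2 * n + 1))] := by
    intro n
    simp only [hL, List.ofFn_succ', List.concat_eq_append, Fin.coe_castSucc, Fin.val_last]
  have hX0 : Xs 0 = Set.univ := by simp [hXs, hL, auxState]
  have hXsucc : ∀ n, Xs (n + 1) = auxStep Pp pick den (Xs n) (ξ (2 * n), f (2 * n + 1)) := by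
    intro n
    simp only [hXs, hLsucc, auxState, List.foldl_append, List.foldl_cons, List.foldl_nil]
  -- unpack White's moves
  set Y : ℕ → Set K := fun n => Xs n ∩ auxFib Pp (Xs n) ⁻¹' {ξ (2 * n)} with hY
  have hmove' : ∀ n, ξ (2 * n + 1) = pick (Y n) (f (2 * n + 1)) ∧
      f (2 * n + 2) = auxFib Pp (Xs (n + 1)) := by
    intro n
    have h := hmove n
    have hlist : (List.ofFn fun i : Fin (n + 1) => (ξ (2 * (i : ℕ)), f (2 * (i : ℕ) + 1)))
        = L (n + 1) := rfl
    rw [hlist, hLsucc] at h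
    simp only [auxStrat, List.dropLast_concat, List.getLast?_concat, Option.getD_some,
      Prod.mk.injEq] at h
    rw [← hLsucc] at h
    exact h
  have hfeven : ∀ n, f (2 * n) = auxFib Pp (Xs n) := by
    intro n
    cases n with
    | zero => rw [hX0]; simpa [auxStrat] using hfirst
    | succ m =>
      have := (hmove' m).2
      have h2 : 2 * (m + 1) = 2 * m + 2 := by ring
      rw [h2]
      exact this
  -- the new state is den of a positive set
  set Z : ℕ → Set K := fun n => Y n ∩ f (2 * n + 1) ⁻¹' {ξ (2 * n + 1)} with hZ
  have hXden : ∀ n, Xs (n + 1) = den (Z n) := by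
    intro n
    rw [hXsucc n]
    simp only [auxStep, ← hY, hZ]
    rw [(hmove' n).1]
  -- positivity chain
  have hchain : ∀ n, Xs n ∉ J ∧ Y n ∉ J ∧ Z n ∉ J := by
    intro n
    induction n with
    | zero =>
      have h0 : Xs 0 ∉ J := by rw [hX0]; exact hUniv
      have hY0 : Y 0 ∉ J := hfibpos _ h0 _
      have hZ0 : Z 0 ∉ J := by
        have h := hpick (Y 0) (f (2 * 0 + 1)) hY0
        rw [← (hmove' 0).1] at h
        exact h
      exact ⟨h0, hY0, hZ0⟩
    | succ m ih =>
      have hXm : Xs (m + 1) ∉ J := by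
        rw [hXden m]
        exact hFpos _ ((hden _ ih.2.2).1)
      have hYm : Y (m + 1) ∉ J := hfibpos _ hXm _
      have hZm : Z (m + 1) ∉ J := by
        have h := hpick (Y (m + 1)) (f (2 * (m + 1) + 1)) hYm
        rw [← (hmove' (m + 1)).1] at h
        exact h
      exact ⟨hXm, hYm, hZm⟩
  have hXF : ∀ n, Xs (n + 1) ∈ F ∧ Xs (n + 1) ⊆ Z n := by
    intro n
    rw [hXden n]
    exact hden _ (hchain n).2.2
  have hdesc : ∀ n, Xs (n + 2) ⊆ Xs (n + 1) := by
    intro n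
    refine (hXF (n + 1)).2.trans ?_
    intro α hα
    exact hα.1.1
  obtain ⟨α, hα⟩ := hFdesc (fun n => Xs (n + 1)) (fun n => (hXF n).1) hdesc
  have hαmem : ∀ n, α ∈ Xs (n + 1) := fun n => Set.mem_iInter.1 hα n
  have hαZ : ∀ n, α ∈ Z n := fun n => (hXF n).2 (hαmem n)
  refine ⟨α, ?_⟩
  intro m
  rcases Nat.even_or_odd m with ⟨k, hk⟩ | ⟨k, hk⟩
  · have hk' : m = 2 * k := by omega
    subst hk'
    have h1 : α ∈ auxFib Pp (Xs k) ⁻¹' {ξ (2 * k)} := ((hαZ k).1).2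
    rw [hfeven k]
    exact h1
  · subst hk
    exact (hαZ k).2

end GamePaper
end

section
/- Let 0 < κ ≤ ℵ0 be a cardinal number. There is a set A_κ ⊆ ω2 (a set of functions ω → {0,1}) such that the game GS_2(A_κ,n) is undetermined for every n with 0 < n < κ, while ONE has a winning strategy in GS_2(A_κ,κ). -/
open Cardinal Set

namespace GamePaper

universe u

section Construction
variable {K : Type} (e : K → ℕ) (r : ℕ → K)

/-- ONE's master strategy on boards `K`, which encodes in the bits it plays on each
board the identity of the board and the complete history of TWO's moves. -/
def sigmaStar (hs : List (K → Fin 2)) (ξ : K) : Fin 2 :=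
  if hs.length = 0 then 0
  else if (Nat.unpair (hs.length - 1)).1 = 0 then
    (if e ξ = (Nat.unpair (hs.length - 1)).2 then 1 else 0)
  else
    hs.getD (Nat.unpair ((Nat.unpair (hs.length - 1)).1 - 1)).1 (fun _ => 0)
      (r (Nat.unpair ((Nat.unpair (hs.length - 1)).1 - 1)).2)

/-- The column at board `ξ` of the play where ONE follows `sigmaStar` and TWO's moves
are `w`. -/
def col (w : ℕ → K → Fin 2) (ξ : K) : ℕ → Fin 2 := fun m =>
  if m % 2 = 0 then sigmaStar e r (List.ofFn fun i : Fin (m / 2) => w i) ξ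
  else w (m / 2) ξ

lemma col_even (w : ℕ → K → Fin 2) (ξ : K) (k : ℕ) :
    col e r w ξ (2 * k) = sigmaStar e r (List.ofFn fun i : Fin k => w i) ξ := by
  have h1 : 2 * k % 2 = 0 := by omega
  have h2 : 2 * k / 2 = k := by omega
  simp [col, h1, h2]

lemma col_odd (w : ℕ → K → Fin 2) (ξ : K) (k : ℕ) :
    col e r w ξ (2 * k + 1) = w k ξ := by
  have h1 : ¬ ((2 * k + 1) % 2 = 0) := by omega
  have h2 : (2 * k + 1) / 2 = k := by omega
  simp [col, h1, h2]

lemma col_posB (w : ℕ → K → Fin 2) (ξ : K) (k : ℕ) :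
    col e r w ξ (2 * (Nat.pair 0 k + 1)) = if e ξ = k then 1 else 0 := by
  rw [col_even]
  have hlen : (List.ofFn fun i : Fin (Nat.pair 0 k + 1) => w i).length = Nat.pair 0 k + 1 :=
    List.length_ofFn
  simp only [sigmaStar, hlen]
  simp [Nat.unpair_pair]

lemma col_posW (hre : ∀ a, r (e a) = a) (w : ℕ → K → Fin 2) (ξ : K) (i : ℕ) (k : K) :
    col e r w ξ (2 * (Nat.pair (Nat.pair i (e k) + 1) 0 + 1)) = w i k := by
  rw [col_even]
  set n := Nat.pair (Nat.pair i (e k) + 1) 0 + 1 with hn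
  have hlen : (List.ofFn fun j : Fin n => w j).length = n := List.length_ofFn
  have hi : i < n := by
    have h1 := Nat.left_le_pair i (e k)
    have h2 := Nat.left_le_pair (Nat.pair i (e k) + 1) 0
    omega
  simp only [sigmaStar, hlen]
  rw [if_neg (by omega), Nat.add_sub_cancel, Nat.unpair_pair]
  simp only [Nat.add_sub_cancel, Nat.unpair_pair]
  rw [if_neg (by simp), List.getD_eq_getElem _ _ (by simp only [List.length_ofFn]; omega)]
  simp [hre]

lemma col_inj (hre : ∀ a, r (e a) = a) {w w' : ℕ → K → Fin 2} {ξ ξ' : K}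
    (h : col e r w ξ = col e r w' ξ') : w = w' ∧ ξ = ξ' := by
  constructor
  · funext i k
    have := congrFun h (2 * (Nat.pair (Nat.pair i (e k) + 1) 0 + 1))
    rwa [col_posW e r hre, col_posW e r hre] at this
  · have := congrFun h (2 * (Nat.pair 0 (e ξ) + 1))
    rw [col_posB, col_posB, if_pos rfl] at this
    by_contra hne
    have hne' : e ξ' ≠ e ξ := fun hh => hne (by rw [← hre ξ', hh, hre])
    rw [if_neg hne'] at this
    exact absurd this (by decide)

lemma oneFollows_sigmaStar {q : ℕ → K → Fin 2} (hq : OneFollows (sigmaStar e r) q) (ξ : K) :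
    (fun m => q m ξ) = col e r (fun i => q (2 * i + 1)) ξ := by
  funext m
  rcases Nat.even_or_odd m with ⟨k, hk⟩ | ⟨k, hk⟩
  · have hm : m = 2 * k := by omega
    subst hm
    rw [col_even]
    exact congrFun (hq k) ξ
  · have hm : m = 2 * k + 1 := by omega
    subst hm
    rw [col_odd]

lemma oneWins_of_P1 {A : Set (ℕ → Fin 2)} (hA : ∀ w : ℕ → K → Fin 2, ∃ ξ, col e r w ξ ∈ A) :
    OneWinsGSBoards (Fin 2) K A := by
  refine ⟨sigmaStar e r, fun q hq => ?_⟩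
  obtain ⟨ξ, h⟩ := hA (fun i => q (2 * i + 1))
  exact ⟨ξ, by rw [oneFollows_sigmaStar e r hq ξ]; exact h⟩

end Construction

lemma oneWinsBoards_transfer {Λ K K' : Type*} (f : K' ≃ K) {A : Set (ℕ → Λ)}
    (h : OneWinsGSBoards Λ K A) : OneWinsGSBoards Λ K' A := by
  obtain ⟨σ, hσ⟩ := h
  refine ⟨fun l ξ' => σ (l.map (fun v => v ∘ f.symm)) (f ξ'), fun q' hq' => ?_⟩
  have hq : OneFollows σ (fun n ξ => q' n (f.symm ξ)) := by
    intro n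
    funext ξ
    have h1 := congrFun (hq' n) (f.symm ξ)
    simp only at h1 ⊢
    rw [h1, Equiv.apply_symm_apply, List.map_ofFn]
    rfl
  obtain ⟨ξ, hξ⟩ := hσ _ hq
  exact ⟨f.symm ξ, hξ⟩

section Plays
variable {n : ℕ}

/-- The play in which ONE follows `σ'` and TWO plays the bit `y k` on every board
in inning `k`. -/
def Qone (σ' : List (Fin n → Fin 2) → Fin n → Fin 2) (y : ℕ → Fin 2) : ℕ → Fin n → Fin 2 :=
  fun m => if m % 2 = 0 then σ' (List.ofFn fun i : Fin (m / 2) => fun _ => y i)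
    else fun _ => y (m / 2)

lemma Qone_even (σ' : List (Fin n → Fin 2) → Fin n → Fin 2) (y : ℕ → Fin 2) (k : ℕ) :
    Qone σ' y (2 * k) = σ' (List.ofFn fun i : Fin k => fun _ => y i) := by
  have h1 : 2 * k % 2 = 0 := by omega
  have h2 : 2 * k / 2 = k := by omega
  simp only [Qone]
  rw [if_pos h1, h2]

lemma Qone_odd (σ' : List (Fin n → Fin 2) → Fin n → Fin 2) (y : ℕ → Fin 2) (k : ℕ) :
    Qone σ' y (2 * k + 1) = fun _ => y k := by
  have h3 : ¬ ((2 * k + 1) % 2 = 0) := by omega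
  have h4 : (2 * k + 1) / 2 = k := by omega
  simp only [Qone]
  rw [if_neg h3, h4]

lemma qone_follows (σ' : List (Fin n → Fin 2) → Fin n → Fin 2) (y : ℕ → Fin 2) :
    OneFollows σ' (Qone σ' y) := by
  intro k
  have hlist : (List.ofFn fun i : Fin k => Qone σ' y (2 * (i : ℕ) + 1)) =
      List.ofFn fun i : Fin k => fun _ => y (i : ℕ) :=
    congrArg List.ofFn (funext fun i => Qone_odd σ' y (i : ℕ))
  rw [hlist]
  exact Qone_even σ' y k

/-- The column at board `i` of `Qone σ' y`. -/
def colOne (σ' : List (Fin n → Fin 2) → Fin n → Fin 2) (y : ℕ → Fin 2) (i : Fin n) :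
    ℕ → Fin 2 := fun m => Qone σ' y m i

lemma colOne_odd (σ' : List (Fin n → Fin 2) → Fin n → Fin 2) (y : ℕ → Fin 2) (i : Fin n)
    (k : ℕ) : colOne σ' y i (2 * k + 1) = y k := by
  simp only [colOne, Qone_odd]

lemma colOne_inj (σ' : List (Fin n → Fin 2) → Fin n → Fin 2) (i : Fin n) :
    Function.Injective (fun y => colOne σ' y i) := by
  intro y y' h
  funext k
  simpa only [colOne_odd] using congrFun h (2 * k + 1)

/-- The play in which TWO follows `τ` and ONE plays the bit `z k` on every board
in inning `k`. -/
def Qtwo (τ : List (Fin n → Fin 2) → Fin n → Fin 2) (z : ℕ → Fin 2) : ℕ → Fin n → Fin 2 :=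
  fun m => if m % 2 = 0 then fun _ => z (m / 2)
    else τ (List.ofFn fun i : Fin (m / 2 + 1) => fun _ => z i)

lemma Qtwo_even (τ : List (Fin n → Fin 2) → Fin n → Fin 2) (z : ℕ → Fin 2) (k : ℕ) :
    Qtwo τ z (2 * k) = fun _ => z k := by
  have h1 : 2 * k % 2 = 0 := by omega
  have h2 : 2 * k / 2 = k := by omega
  simp only [Qtwo]
  rw [if_pos h1, h2]

lemma Qtwo_odd (τ : List (Fin n → Fin 2) → Fin n → Fin 2) (z : ℕ → Fin 2) (k : ℕ) :
    Qtwo τ z (2 * k + 1) = τ (List.ofFn fun i : Fin (k + 1) => fun _ => z i) := by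
  have h3 : ¬ ((2 * k + 1) % 2 = 0) := by omega
  have h4 : (2 * k + 1) / 2 = k := by omega
  simp only [Qtwo]
  rw [if_neg h3, h4]

lemma qtwo_follows (τ : List (Fin n → Fin 2) → Fin n → Fin 2) (z : ℕ → Fin 2) :
    TwoFollows τ (Qtwo τ z) := by
  intro k
  have hlist : (List.ofFn fun i : Fin (k + 1) => Qtwo τ z (2 * (i : ℕ))) =
      List.ofFn fun i : Fin (k + 1) => fun _ => z (i : ℕ) :=
    congrArg List.ofFn (funext fun i => Qtwo_even τ z (i : ℕ))
  rw [hlist]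
  exact Qtwo_odd τ z k

/-- The column at board `0` of `Qtwo τ z`. -/
def colTwo (τ : List (Fin n → Fin 2) → Fin n → Fin 2) (hn : 0 < n) (z : ℕ → Fin 2) :
    ℕ → Fin 2 := fun m => Qtwo τ z m ⟨0, hn⟩

lemma colTwo_even (τ : List (Fin n → Fin 2) → Fin n → Fin 2) (hn : 0 < n) (z : ℕ → Fin 2)
    (k : ℕ) : colTwo τ hn z (2 * k) = z k := by
  simp only [colTwo, Qtwo_even]

lemma colTwo_inj (τ : List (Fin n → Fin 2) → Fin n → Fin 2) (hn : 0 < n) :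
    Function.Injective (colTwo τ hn) := by
  intro z z' h
  funext k
  simpa only [colTwo_even] using congrFun h (2 * k)

end Plays


/-- `𝔠` at universe `0`. -/
abbrev continuum0 : Cardinal.{0} := Cardinal.continuum

section Recursion

open scoped Classical
set_option synthInstance.maxHeartbeats 1000000

variable {K : Type} (e : K → ℕ) (r : ℕ → K)

/-- Strategies in the `n`-board game on `Fin 2`. -/
def Strat (n : ℕ) : Type := List (Fin n → Fin 2) → Fin n → Fin 2

/-- Requirements for the transfinite construction: `true` tasks diagonalize against
ONE's strategies, `false` tasks against TWO's strategies. -/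
def Task : Type := Bool × Σ n : ℕ, Strat n

/-- If `x` is a column of some `sigmaStar`-play `w`, reserve a fresh column of the same
play (avoiding the forbidden sets `AM` and `N`). -/
noncomputable def resv (AM N : Set (ℕ → Fin 2)) (x : ℕ → Fin 2) : Set (ℕ → Fin 2) :=
  if h : ∃ p : (ℕ → K → Fin 2) × K, col e r p.1 p.2 ∉ AM ∪ N ∧ ∃ ξ, col e r p.1 ξ = x
  then {col e r h.choose.1 h.choose.2} else ∅

/-- Stage handling a strategy `σ'` of ONE in the `n`-board game: TWO defeats it by
copying a suitable `y` on all boards; the resulting columns are barred from `A`,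
and for each barred column which is a column of a `sigmaStar`-play, a substitute
column of the same play is reserved for `A`. -/
noncomputable def stepII (AP AM : Set (ℕ → Fin 2)) (n : ℕ) (σ' : Strat n) :
    Set (ℕ → Fin 2) × Set (ℕ → Fin 2) :=
  if _hn : 0 < n ∧ (n : Cardinal) < #K then
    if hy : ∃ y : ℕ → Fin 2, ∀ i : Fin n, colOne σ' y i ∉ AP then
      (⋃ i : Fin n, resv e r AM (Set.range (colOne σ' hy.choose)) (colOne σ' hy.choose i),
        Set.range (colOne σ' hy.choose))
    else (∅, ∅)
  else (∅, ∅)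

/-- Stage handling a strategy `τ` of TWO in the `n`-board game: ONE defeats it by
copying a suitable `z` on all boards, and the column at board `0` is put into `A`. -/
noncomputable def stepIII (AM : Set (ℕ → Fin 2)) (n : ℕ) (τ : Strat n) :
    Set (ℕ → Fin 2) × Set (ℕ → Fin 2) :=
  if hn : 0 < n then
    if hz : ∃ z : ℕ → Fin 2, colTwo τ hn z ∉ AM then ({colTwo τ hn hz.choose}, ∅)
    else (∅, ∅)
  else (∅, ∅)

noncomputable def step (AP AM : Set (ℕ → Fin 2)) : Task → Set (ℕ → Fin 2) × Set (ℕ → Fin 2)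
  | (true, ⟨n, σ'⟩) => stepII e r AP AM n σ'
  | (false, ⟨n, τ⟩) => stepIII AM n τ

lemma resv_spec {AM N : Set (ℕ → Fin 2)} {x v : ℕ → Fin 2} (hv : v ∈ resv e r AM N x) :
    v ∉ AM ∧ v ∉ N := by
  unfold resv at hv
  split at hv
  · rename_i h
    rw [Set.mem_singleton_iff] at hv
    subst hv
    have := h.choose_spec.1
    exact ⟨fun hc => this (Or.inl hc), fun hc => this (Or.inr hc)⟩
  · exact absurd hv (Set.notMem_empty v)

lemma resv_fire (hre : ∀ a, r (e a) = a) {AM N : Set (ℕ → Fin 2)} {x : ℕ → Fin 2}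
    {w : ℕ → K → Fin 2} {ξ : K} (hx : col e r w ξ = x)
    (hfree : ∃ ξ', col e r w ξ' ∉ AM ∪ N) :
    ∃ ξ', col e r w ξ' ∈ resv e r AM N x := by
  have hg : ∃ p : (ℕ → K → Fin 2) × K, col e r p.1 p.2 ∉ AM ∪ N ∧ ∃ ξ0, col e r p.1 ξ0 = x :=
    ⟨(w, hfree.choose), hfree.choose_spec, ξ, hx⟩
  rw [resv, dif_pos hg]
  obtain ⟨h1, ξ0, h2⟩ := hg.choose_spec
  have hw : hg.choose.1 = w := (col_inj e r hre (h2.trans hx.symm)).1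
  exact ⟨hg.choose.2, by rw [Set.mem_singleton_iff, hw]⟩

/-! The transfinite recursion: stages are indexed by `(𝔠.ord).toType`, whose initial
segments have cardinality `< 𝔠`. -/

noncomputable def FF (ι : Task → (continuum0.ord).ToType) :
    (continuum0.ord).ToType → Set (ℕ → Fin 2) × Set (ℕ → Fin 2) :=
  wellFounded_lt.fix (fun b rec =>
    if hb : ∃ t : Task, ι t = b then
      step e r (⋃ c : {c // c < b}, (rec c.1 c.2).1) (⋃ c : {c // c < b}, (rec c.1 c.2).2)
        hb.choose
    else (∅, ∅))

/-- The union of the positive parts of all stages before `b`. -/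
noncomputable def APlt (ι : Task → (continuum0.ord).ToType)
    (b : (continuum0.ord).ToType) : Set (ℕ → Fin 2) :=
  ⋃ c : {c // c < b}, (FF e r ι c.1).1

/-- The union of the negative parts of all stages before `b`. -/
noncomputable def AMlt (ι : Task → (continuum0.ord).ToType)
    (b : (continuum0.ord).ToType) : Set (ℕ → Fin 2) :=
  ⋃ c : {c // c < b}, (FF e r ι c.1).2

lemma FF_eq (ι : Task → (continuum0.ord).ToType) (b : (continuum0.ord).ToType) :
    FF e r ι b = if hb : ∃ t : Task, ι t = b then
      step e r (APlt e r ι b) (AMlt e r ι b) hb.choose else (∅, ∅) := by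
  conv_lhs => rw [FF, WellFounded.fix_eq]
  rfl

lemma FF_at (ι : Task → (continuum0.ord).ToType) (hι : Function.Injective ι) (t : Task) :
    FF e r ι (ι t) = step e r (APlt e r ι (ι t)) (AMlt e r ι (ι t)) t := by
  have hb : ∃ t' : Task, ι t' = ι t := ⟨t, rfl⟩
  rw [FF_eq, dif_pos hb]
  have hc : hb.choose = t := hι hb.choose_spec
  rw [hc]

lemma FF1_subset_APlt (ι : Task → (continuum0.ord).ToType)
    {c b : (continuum0.ord).ToType} (h : c < b) :
    (FF e r ι c).1 ⊆ APlt e r ι b :=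
  fun x hx => Set.mem_iUnion.mpr ⟨⟨c, h⟩, hx⟩

lemma FF2_subset_AMlt (ι : Task → (continuum0.ord).ToType)
    {c b : (continuum0.ord).ToType} (h : c < b) :
    (FF e r ι c).2 ⊆ AMlt e r ι b :=
  fun x hx => Set.mem_iUnion.mpr ⟨⟨c, h⟩, hx⟩

lemma APlt_subset (ι : Task → (continuum0.ord).ToType)
    {c b : (continuum0.ord).ToType} (h : c < b) :
    APlt e r ι c ⊆ APlt e r ι b := by
  intro x hx
  obtain ⟨⟨d, hd⟩, hxd⟩ := Set.mem_iUnion.mp hx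
  exact Set.mem_iUnion.mpr ⟨⟨d, hd.trans h⟩, hxd⟩

lemma stepIII_2 (AM : Set (ℕ → Fin 2)) (n : ℕ) (τ : Strat n) : (stepIII AM n τ).2 = ∅ := by
  unfold stepIII
  split_ifs <;> rfl

lemma stepII1_spec {AP AM : Set (ℕ → Fin 2)} {n : ℕ} {σ' : Strat n} {v : ℕ → Fin 2}
    (hv : v ∈ (stepII e r AP AM n σ').1) :
    v ∉ AM ∧ v ∉ (stepII e r AP AM n σ').2 := by
  unfold stepII at hv ⊢
  split_ifs at hv ⊢ with h1 h2
  · obtain ⟨i, hi⟩ := Set.mem_iUnion.mp hv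
    have := resv_spec e r hi
    exact ⟨this.1, this.2⟩
  · simp at hv
  · simp at hv

lemma stepIII1_spec {AM : Set (ℕ → Fin 2)} {n : ℕ} {τ : Strat n} {v : ℕ → Fin 2}
    (hv : v ∈ (stepIII AM n τ).1) : v ∉ AM := by
  unfold stepIII at hv
  split_ifs at hv with h1 h2
  · rw [Set.mem_singleton_iff] at hv
    subst hv
    exact h2.choose_spec
  · simp at hv
  · simp at hv

lemma stepII2_spec {AP AM : Set (ℕ → Fin 2)} {n : ℕ} {σ' : Strat n} {v : ℕ → Fin 2}
    (hv : v ∈ (stepII e r AP AM n σ').2) : v ∉ AP := by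
  unfold stepII at hv
  split_ifs at hv with h1 h2
  · obtain ⟨i, rfl⟩ := hv
    exact h2.choose_spec i
  · simp at hv
  · simp at hv

lemma FF2_not_APlt (ι : Task → (continuum0.ord).ToType)
    (b : (continuum0.ord).ToType) {v : ℕ → Fin 2} (hv : v ∈ (FF e r ι b).2) :
    v ∉ APlt e r ι b := by
  rw [FF_eq] at hv
  split at hv
  · rename_i hb
    rcases ht : hb.choose with ⟨bb, n, s⟩
    rw [ht] at hv
    cases bb
    · rw [show step e r (APlt e r ι b) (AMlt e r ι b) (false, ⟨n, s⟩) =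
          stepIII (AMlt e r ι b) n s from rfl, stepIII_2] at hv
      exact absurd hv (Set.notMem_empty v)
    · exact stepII2_spec e r hv
  · exact absurd hv (Set.notMem_empty v)

lemma FF1_spec (ι : Task → (continuum0.ord).ToType)
    (b : (continuum0.ord).ToType) {v : ℕ → Fin 2} (hv : v ∈ (FF e r ι b).1) :
    v ∉ AMlt e r ι b ∧ v ∉ (FF e r ι b).2 := by
  by_cases hb : ∃ t : Task, ι t = b
  · rw [FF_eq, dif_pos hb] at hv ⊢
    rcases ht : hb.choose with ⟨bb, n, s⟩
    simp only [ht] at hv ⊢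
    cases bb
    · refine ⟨stepIII1_spec hv, ?_⟩
      rw [show step e r (APlt e r ι b) (AMlt e r ι b) (false, ⟨n, s⟩) =
          stepIII (AMlt e r ι b) n s from rfl, stepIII_2]
      exact Set.notMem_empty v
    · exact stepII1_spec e r hv
  · rw [FF_eq, dif_neg hb] at hv
    exact absurd hv (Set.notMem_empty v)

/-! Cardinality estimates. -/

lemma mkX : #(ℕ → Fin 2) = continuum0 := by
  rw [Cardinal.mk_arrow]
  simp only [Cardinal.mk_fin, Cardinal.mk_nat, Cardinal.lift_id]
  norm_num [Cardinal.two_power_aleph0]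

lemma segment_small (b : (continuum0.ord).ToType) :
    #{c // c < b} < continuum0 := by
  letI iwo : IsWellOrder (continuum0.ord).ToType (· < ·) := isWellOrder_lt
  have h := @Ordinal.card_typein _ _ iwo b
  have h2 : (@Ordinal.typein _ _ iwo).toRelEmbedding b < continuum0.ord := by
    have := @Ordinal.typein_lt_type _ _ iwo b
    rwa [Ordinal.type_toType] at this
  rw [← h]
  exact Cardinal.lt_ord.mp h2

lemma union_small (b : (continuum0.ord).ToType) (g : {c // c < b} → Set (ℕ → Fin 2))
    (hg : ∀ c, (g c).Finite) : #(⋃ c, g c) < continuum0 := by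
  calc #(⋃ c, g c) ≤ Cardinal.sum.{0,0} (fun c => #(g c)) := Cardinal.mk_iUnion_le_sum_mk
    _ ≤ Cardinal.sum.{0,0} (fun _ : {c // c < b} => ℵ₀) := Cardinal.sum_le_sum _ _ (fun c => by
          haveI := ((hg c).countable).to_subtype
          exact Cardinal.mk_le_aleph0)
    _ = (#{c // c < b} * ℵ₀ : Cardinal.{0}) := by rw [Cardinal.sum_const]; simp
    _ < continuum0 :=
        Cardinal.mul_lt_of_lt Cardinal.aleph0_le_continuum (segment_small b)
          Cardinal.aleph0_lt_continuum

lemma resv_fin (AM N : Set (ℕ → Fin 2)) (x : ℕ → Fin 2) : (resv e r AM N x).Finite := by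
  unfold resv
  split_ifs
  · exact Set.finite_singleton _
  · exact Set.finite_empty

lemma FF_fin (ι : Task → (continuum0.ord).ToType) (b : (continuum0.ord).ToType) :
    (FF e r ι b).1.Finite ∧ (FF e r ι b).2.Finite := by
  rw [FF_eq]
  split
  · rename_i hb
    rcases ht : hb.choose with ⟨bb, n, s⟩
    cases bb
    · show (stepIII _ n s).1.Finite ∧ (stepIII _ n s).2.Finite
      unfold stepIII
      split_ifs
      · exact ⟨Set.finite_singleton _, Set.finite_empty⟩
      · exact ⟨Set.finite_empty, Set.finite_empty⟩
      · exact ⟨Set.finite_empty, Set.finite_empty⟩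
    · show (stepII e r _ _ n s).1.Finite ∧ (stepII e r _ _ n s).2.Finite
      unfold stepII
      split_ifs
      · exact ⟨Set.finite_iUnion (fun i => resv_fin e r _ _ _), Set.finite_range _⟩
      · exact ⟨Set.finite_empty, Set.finite_empty⟩
      · exact ⟨Set.finite_empty, Set.finite_empty⟩
  · simp

lemma APlt_small (ι : Task → (continuum0.ord).ToType)
    (b : (continuum0.ord).ToType) : #(APlt e r ι b) < continuum0 :=
  union_small b _ (fun c => (FF_fin e r ι c.1).1)

lemma AMlt_small (ι : Task → (continuum0.ord).ToType)
    (b : (continuum0.ord).ToType) : #(AMlt e r ι b) < continuum0 :=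
  union_small b _ (fun c => (FF_fin e r ι c.1).2)

lemma exists_avoid_one {n : ℕ} (σ' : Strat n) (AP : Set (ℕ → Fin 2))
    (hAP : #AP < continuum0) :
    ∃ y : ℕ → Fin 2, ∀ i : Fin n, colOne σ' y i ∉ AP := by
  by_contra hcon
  push_neg at hcon
  choose f hf using hcon
  have hinj : Function.Injective (fun y => ((f y, ⟨colOne σ' y (f y), hf y⟩) : Fin n × AP)) := by
    intro y y' h
    have h1 : f y = f y' := congrArg Prod.fst h
    have h2 : colOne σ' y (f y) = colOne σ' y' (f y') := congrArg (fun p => (Prod.snd p : AP).1) h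
    rw [← h1] at h2
    exact colOne_inj σ' (f y) h2
  have hle := Cardinal.mk_le_of_injective hinj
  rw [mkX] at hle
  have hlt : #(Fin n × AP) < continuum0 := by
    rw [Cardinal.mk_prod]
    simp only [Cardinal.mk_fin, Cardinal.lift_id]
    exact Cardinal.mul_lt_of_lt Cardinal.aleph0_le_continuum
      (Cardinal.nat_lt_continuum n) hAP
  exact absurd (hle.trans_lt hlt) (lt_irrefl _)

lemma exists_avoid_two {n : ℕ} (τ : Strat n) (hn : 0 < n) (AM : Set (ℕ → Fin 2))
    (hAM : #AM < continuum0) : ∃ z : ℕ → Fin 2, colTwo τ hn z ∉ AM := by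
  by_contra hcon
  push_neg at hcon
  have hinj : Function.Injective (fun z => (⟨colTwo τ hn z, hcon z⟩ : AM)) := by
    intro z z' h
    exact colTwo_inj τ hn (congrArg Subtype.val h)
  have hle := Cardinal.mk_le_of_injective hinj
  rw [mkX] at hle
  exact absurd (hle.trans_lt hAM) (lt_irrefl _)

lemma exists_col_notin_range (hre : ∀ a, r (e a) = a) {w : ℕ → K → Fin 2} {n : ℕ}
    (hn : (n : Cardinal) < #K) (f : Fin n → (ℕ → Fin 2)) :
    ∃ ξ', col e r w ξ' ∉ Set.range f := by
  by_contra h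
  push_neg at h
  have h' : ∀ ξ', ∃ i, f i = col e r w ξ' := fun ξ' => h ξ'
  choose g hg using h'
  have hginj : Function.Injective g := by
    intro a b hab
    have : col e r w a = col e r w b := by rw [← hg a, ← hg b, hab]
    exact (col_inj e r hre this).2
  have := Cardinal.mk_le_of_injective hginj
  rw [Cardinal.mk_fin] at this
  exact absurd hn (not_lt.mpr this)

/-- Key invariant: whenever a column of the `sigmaStar`-play `w` is barred from `A` at
stage `b`, some other column of the same play is put into `A` by stage `b`. -/
lemma inv2 (hre : ∀ a, r (e a) = a) (ι : Task → (continuum0.ord).ToType) :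
    ∀ b : (continuum0.ord).ToType, ∀ (w : ℕ → K → Fin 2) (ξ : K),
      col e r w ξ ∈ (FF e r ι b).2 →
      ∃ ξ', col e r w ξ' ∈ (FF e r ι b).1 ∪ APlt e r ι b := by
  intro b0
  refine wellFounded_lt.induction (C := fun b => ∀ (w : ℕ → K → Fin 2) (ξ : K),
    col e r w ξ ∈ (FF e r ι b).2 →
    ∃ ξ', col e r w ξ' ∈ (FF e r ι b).1 ∪ APlt e r ι b) b0 ?_
  intro b IH w ξ hmem
  by_cases hb : ∃ t : Task, ι t = b
  case neg => rw [FF_eq, dif_neg hb] at hmem; exact absurd hmem (Set.notMem_empty _)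
  rw [FF_eq, dif_pos hb] at hmem
  rcases ht : hb.choose with ⟨bb, n, s⟩
  simp only [ht] at hmem
  cases bb
  · rw [show step e r (APlt e r ι b) (AMlt e r ι b) (false, ⟨n, s⟩) =
      stepIII (AMlt e r ι b) n s from rfl, stepIII_2] at hmem
    exact absurd hmem (Set.notMem_empty _)
  · rw [show step e r (APlt e r ι b) (AMlt e r ι b) (true, ⟨n, s⟩) =
      stepII e r (APlt e r ι b) (AMlt e r ι b) n s from rfl] at hmem
    unfold stepII at hmem
    split_ifs at hmem with h1 h2
    · have hmem' : col e r w ξ ∈ Set.range (colOne s h2.choose) := hmem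
      obtain ⟨i, hi⟩ := hmem'
      by_cases hAP : ∃ ξ', col e r w ξ' ∈ APlt e r ι b
      · exact ⟨hAP.choose, Or.inr hAP.choose_spec⟩
      · push_neg at hAP
        have hAM : ∀ ξ', col e r w ξ' ∉ AMlt e r ι b := by
          intro ξ' hmem2
          obtain ⟨⟨c, hc⟩, hc2⟩ := Set.mem_iUnion.mp hmem2
          obtain ⟨ξ'', h''⟩ := IH c hc w ξ' hc2
          rcases h'' with h'' | h''
          · exact hAP ξ'' (FF1_subset_APlt e r ι hc h'')
          · exact hAP ξ'' (APlt_subset e r ι hc h'')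
        have hfree : ∃ ξ', col e r w ξ' ∉ AMlt e r ι b ∪ Set.range (colOne s h2.choose) := by
          obtain ⟨ξ', hξ'⟩ := exists_col_notin_range e r hre h1.2 (colOne s h2.choose)
          exact ⟨ξ', fun hc => hc.elim (hAM ξ') hξ'⟩
        obtain ⟨ξ', hξ'⟩ := resv_fire e r hre hi.symm hfree
        refine ⟨ξ', Or.inl ?_⟩
        rw [FF_eq, dif_pos hb]
        simp only [ht]
        rw [show step e r (APlt e r ι b) (AMlt e r ι b) (true, ⟨n, s⟩) =
          stepII e r (APlt e r ι b) (AMlt e r ι b) n s from rfl]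
        unfold stepII
        rw [dif_pos h1, dif_pos h2]
        exact Set.mem_iUnion.mpr ⟨i, hξ'⟩
    · exact absurd hmem (Set.notMem_empty _)
    · exact absurd hmem (Set.notMem_empty _)

/-- All columns ever put into `A`. -/
noncomputable def APtot (ι : Task → (continuum0.ord).ToType) : Set (ℕ → Fin 2) :=
  ⋃ b, (FF e r ι b).1

/-- All columns ever barred from `A`. -/
noncomputable def AMtot (ι : Task → (continuum0.ord).ToType) : Set (ℕ → Fin 2) :=
  ⋃ b, (FF e r ι b).2

lemma FF1_subset_APtot (ι : Task → (continuum0.ord).ToType) (b : (continuum0.ord).ToType) :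
    (FF e r ι b).1 ⊆ APtot e r ι := fun x hx => Set.mem_iUnion.mpr ⟨b, hx⟩

lemma FF2_subset_AMtot (ι : Task → (continuum0.ord).ToType) (b : (continuum0.ord).ToType) :
    (FF e r ι b).2 ⊆ AMtot e r ι := fun x hx => Set.mem_iUnion.mpr ⟨b, hx⟩

lemma APlt_subset_APtot (ι : Task → (continuum0.ord).ToType) (b : (continuum0.ord).ToType) :
    APlt e r ι b ⊆ APtot e r ι := by
  intro x hx
  obtain ⟨⟨c, hc⟩, h⟩ := Set.mem_iUnion.mp hx
  exact Set.mem_iUnion.mpr ⟨c, h⟩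

lemma tot_disj (ι : Task → (continuum0.ord).ToType) {v : ℕ → Fin 2}
    (h1 : v ∈ APtot e r ι) (h2 : v ∈ AMtot e r ι) : False := by
  obtain ⟨b, hb1⟩ := Set.mem_iUnion.mp h1
  obtain ⟨c, hc2⟩ := Set.mem_iUnion.mp h2
  rcases lt_trichotomy b c with h | h | h
  · exact FF2_not_APlt e r ι c hc2 (FF1_subset_APlt e r ι h hb1)
  · subst h
    exact (FF1_spec e r ι b hb1).2 hc2
  · exact (FF1_spec e r ι b hb1).1 (FF2_subset_AMlt e r ι h hc2)

lemma strat_le (n : ℕ) : #(Strat n) ≤ continuum0 := by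
  have h1 : #(Strat n) = #(Fin n → Fin 2) ^ #(List (Fin n → Fin 2)) := by
    rw [show Strat n = (List (Fin n → Fin 2) → Fin n → Fin 2) from rfl, Cardinal.mk_arrow,
      Cardinal.lift_id, Cardinal.lift_id]
  rw [h1]
  calc #(Fin n → Fin 2) ^ #(List (Fin n → Fin 2))
      ≤ ℵ₀ ^ #(List (Fin n → Fin 2)) := Cardinal.power_le_power_right Cardinal.mk_le_aleph0
    _ ≤ ℵ₀ ^ (ℵ₀ : Cardinal.{0}) :=
        Cardinal.power_le_power_left Cardinal.aleph0_ne_zero Cardinal.mk_le_aleph0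
    _ = continuum0 := Cardinal.aleph0_power_aleph0

lemma task_le : #Task ≤ continuum0 := by
  have hsig : #(Σ n : ℕ, Strat n) ≤ continuum0 := by
    rw [Cardinal.mk_sigma]
    calc Cardinal.sum.{0,0} (fun n : ℕ => #(Strat n))
        ≤ Cardinal.sum.{0,0} (fun _ : ℕ => continuum0) := Cardinal.sum_le_sum _ _ strat_le
      _ = #ℕ * continuum0 := by rw [Cardinal.sum_const]; simp
      _ = ℵ₀ * continuum0 := by rw [Cardinal.mk_nat]
      _ ≤ continuum0 * continuum0 := mul_le_mul_left Cardinal.aleph0_le_continuum _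
      _ = continuum0 := Cardinal.mul_eq_self Cardinal.aleph0_le_continuum
  calc #Task = #Bool * #(Σ n : ℕ, Strat n) := by
        rw [show Task = (Bool × Σ n : ℕ, Strat n) from rfl, Cardinal.mk_prod,
          Cardinal.lift_id, Cardinal.lift_id]
    _ ≤ ℵ₀ * continuum0 := mul_le_mul' Cardinal.mk_le_aleph0 hsig
    _ ≤ continuum0 * continuum0 := mul_le_mul_left Cardinal.aleph0_le_continuum _
    _ = continuum0 := Cardinal.mul_eq_self Cardinal.aleph0_le_continuum

/-- The master construction: a set `A` of plays such that (1) every `sigmaStar`-play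
has a column in `A`; (2) every strategy of ONE in an `n`-board game with
`0 < n < #K` is defeated by TWO copying some fixed `y` on all boards; (3) every
strategy of TWO in an `n`-board game with `0 < n` is defeated by ONE copying some
fixed `z` on all boards. -/
theorem exists_good_A (hre : ∀ a, r (e a) = a) :
    ∃ A : Set (ℕ → Fin 2),
      (∀ w : ℕ → K → Fin 2, ∃ ξ, col e r w ξ ∈ A) ∧
      (∀ n : ℕ, 0 < n → (n : Cardinal) < #K →
        ∀ σ' : List (Fin n → Fin 2) → Fin n → Fin 2,
          ∃ y : ℕ → Fin 2, ∀ i : Fin n, colOne σ' y i ∉ A) ∧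
      (∀ n : ℕ, ∀ hn : 0 < n, ∀ τ : List (Fin n → Fin 2) → Fin n → Fin 2,
        ∃ z : ℕ → Fin 2, colTwo τ hn z ∈ A) := by
  obtain ⟨ι, hι⟩ : ∃ ι : Task → (continuum0.ord).ToType, Function.Injective ι := by
    have h : #Task ≤ #((continuum0.ord).ToType) := by
      rw [Cardinal.mk_toType, Cardinal.card_ord]
      exact task_le
    obtain ⟨f⟩ := (Cardinal.le_def _ _).mp h
    exact ⟨f, f.injective⟩
  set A : Set (ℕ → Fin 2) := APtot e r ι ∪
    {x | ∃ w : ℕ → K → Fin 2, (∀ ξ, col e r w ξ ∉ AMtot e r ι) ∧ x = col e r w (r 0)} with hA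
  have hA_AM : ∀ v ∈ A, v ∉ AMtot e r ι := by
    intro v hv hvm
    rcases hv with hv | hv
    · exact tot_disj e r ι hv hvm
    · obtain ⟨w, hw, rfl⟩ := hv
      exact hw (r 0) hvm
  refine ⟨A, ?_, ?_, ?_⟩
  · intro w
    by_cases hAM : ∃ ξ, col e r w ξ ∈ AMtot e r ι
    · obtain ⟨ξ, hξ⟩ := hAM
      obtain ⟨b, hb⟩ := Set.mem_iUnion.mp hξ
      obtain ⟨ξ', h'⟩ := inv2 e r hre ι b w ξ hb
      rcases h' with h' | h'
      · exact ⟨ξ', Or.inl (FF1_subset_APtot e r ι b h')⟩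
      · exact ⟨ξ', Or.inl (APlt_subset_APtot e r ι b h')⟩
    · push_neg at hAM
      exact ⟨r 0, Or.inr ⟨w, hAM, rfl⟩⟩
  · intro n hn0 hnK σ'
    set t : Task := (true, ⟨n, σ'⟩) with htdef
    have hFF := FF_at e r ι hι t
    have h1 : 0 < n ∧ (n : Cardinal) < #K := ⟨hn0, hnK⟩
    have h2 : ∃ y : ℕ → Fin 2, ∀ i : Fin n, colOne σ' y i ∉ APlt e r ι (ι t) :=
      exists_avoid_one σ' _ (APlt_small e r ι (ι t))
    refine ⟨h2.choose, fun i hiA => ?_⟩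
    have hmem : colOne σ' h2.choose i ∈ (FF e r ι (ι t)).2 := by
      rw [hFF, show step e r (APlt e r ι (ι t)) (AMlt e r ι (ι t)) (true, ⟨n, σ'⟩) =
        stepII e r (APlt e r ι (ι t)) (AMlt e r ι (ι t)) n σ' from rfl]
      unfold stepII
      rw [dif_pos h1, dif_pos h2]
      exact ⟨i, rfl⟩
    exact hA_AM _ hiA (FF2_subset_AMtot e r ι (ι t) hmem)
  · intro n hn τ
    set t : Task := (false, ⟨n, τ⟩) with htdef
    have hFF := FF_at e r ι hι t
    have h2 : ∃ z : ℕ → Fin 2, colTwo τ hn z ∉ AMlt e r ι (ι t) :=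
      exists_avoid_two τ hn _ (AMlt_small e r ι (ι t))
    refine ⟨h2.choose, Or.inl (FF1_subset_APtot e r ι (ι t) ?_)⟩
    rw [hFF, show step e r (APlt e r ι (ι t)) (AMlt e r ι (ι t)) (false, ⟨n, τ⟩) =
      stepIII (AMlt e r ι (ι t)) n τ from rfl]
    unfold stepIII
    rw [dif_pos hn, dif_pos h2]
    exact rfl

end Recursion


/-- Package of the construction: `A` makes all `n`-board games (`0 < n < #K`)
undetermined while ONE wins on any board set of size `#K`. -/
lemma final_lemma {K : Type} (e : K → ℕ) (r : ℕ → K) (hre : ∀ a, r (e a) = a) :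
    ∃ A : Set (ℕ → Fin 2),
      (∀ n : ℕ, 0 < n → (n : Cardinal) < #K → ¬ GSBoardsDetermined (Fin 2) (Fin n) A) ∧
      ∀ K' : Type, #K' = #K → OneWinsGSBoards (Fin 2) K' A := by
  obtain ⟨A, hP1, hP2, hP3⟩ := exists_good_A e r hre
  refine ⟨A, ?_, ?_⟩
  · intro n hn0 hnK hdet
    rcases hdet with ⟨σ', hσ'⟩ | ⟨τ, hτ⟩
    · obtain ⟨y, hy⟩ := hP2 n hn0 hnK σ'
      obtain ⟨ξ, hξ⟩ := hσ' (Qone σ' y) (qone_follows σ' y)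
      exact hy ξ hξ
    · obtain ⟨z, hz⟩ := hP3 n hn0 τ
      exact hτ (Qtwo τ z) (qtwo_follows τ z) ⟨0, hn0⟩ hz
  · intro K' hK'
    have hne : Nonempty (K' ≃ K) := Cardinal.eq.mp hK'
    exact oneWinsBoards_transfer hne.some (oneWins_of_P1 e r hP1)

/-- Theorem (paper Thm 29(1)): for `0 < κ ≤ ℵ₀` there is `A ⊆ ω2` such that
`GS₂(A, n)` is undetermined for `0 < n < κ` while ONE has a winning strategy in
`GS₂(A, κ)`. -/
theorem statement_13 (κ : Cardinal.{0}) (h0 : 0 < κ) (hκ : κ ≤ ℵ₀) :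
    ∃ A : Set (ℕ → Fin 2),
      (∀ n : ℕ, 0 < n → (n : Cardinal) < κ → ¬ GSBoardsDetermined (Fin 2) (Fin n) A) ∧
      ∀ K : Type, #K = κ → OneWinsGSBoards (Fin 2) K A := by
  rcases hκ.lt_or_eq with hlt | heq
  · obtain ⟨m, rfl⟩ := Cardinal.lt_aleph0.mp hlt
    have hm : 0 < m := by exact_mod_cast h0
    obtain ⟨A, h1, h2⟩ := final_lemma (K := Fin m) Fin.val
      (fun j => ⟨j % m, Nat.mod_lt j hm⟩) (fun k => Fin.ext (Nat.mod_eq_of_lt k.isLt))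
    have hcard : #(Fin m) = (m : Cardinal) := Cardinal.mk_fin m
    exact ⟨A, fun n hn hnκ => h1 n hn (by rw [hcard]; exact hnκ),
      fun K hK => h2 K (by rw [hK, hcard])⟩
  · obtain ⟨A, h1, h2⟩ := final_lemma (K := ℕ) id id (fun k => rfl)
    refine ⟨A, fun n hn hnκ => h1 n hn (by rw [Cardinal.mk_nat, ← heq]; exact hnκ),
      fun K hK => h2 K ?_⟩
    rw [hK, Cardinal.mk_nat]
    exact heq

end GamePaper
end

section
/- There is a strategy σ for ONE in the game structure G^ω such that, for every play F = (f_n : n < ω) in which ONE follows σ, the sets B^F_i and B^F_j are interlaced for all i, j ∈ ω with i ≠ j. -/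
open Cardinal Set

namespace GamePaper

universe u

/-! ### Auxiliary material for `statement_15` -/

/-- Triangular numbers. -/
def tri : ℕ → ℕ
  | 0 => 0
  | k + 1 => tri k + (k + 1)

lemma tri_strictMono : StrictMono tri :=
  strictMono_nat_of_lt_succ fun k => by simp [tri]

lemma self_le_tri (k : ℕ) : k ≤ tri k := by
  induction k with
  | zero => simp [tri]
  | succ n ih => simp only [tri]; omega

/-- The stage of round `n`. -/
def stage (n : ℕ) : ℕ := Nat.findGreatest (fun k => tri k ≤ n) n

/-- The coordinate active at round `n`. -/
def coordAt (n : ℕ) : ℕ := n - tri (stage n)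

lemma stage_spec {i k : ℕ} (h : i ≤ k) : stage (tri k + i) = k := by
  have hk : k ≤ tri k + i := le_trans (self_le_tri k) (Nat.le_add_right _ _)
  refine (Nat.findGreatest_eq_iff).mpr ⟨hk, fun _ => Nat.le_add_right _ _, ?_⟩
  intro m hm _ hle
  have h1 : tri (k + 1) ≤ tri m := tri_strictMono.monotone hm
  simp only [tri] at h1
  omega

lemma coordAt_spec {i k : ℕ} (h : i ≤ k) : coordAt (tri k + i) = i := by
  rw [coordAt, stage_spec h]; omega

lemma tri_stage_le (n : ℕ) : tri (stage n) ≤ n :=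
  Nat.findGreatest_spec (P := fun k => tri k ≤ n) (Nat.zero_le n) (by simp [tri])

lemma lt_tri_stage_succ (n : ℕ) : n < tri (stage n + 1) := by
  by_contra h
  push_neg at h
  have h2 : stage n + 1 ≤ n := le_trans (self_le_tri _) h
  exact Nat.findGreatest_is_greatest (Nat.lt_succ_self _) h2 h

lemma coordAt_le_stage (n : ℕ) : coordAt n ≤ stage n := by
  have h1 := tri_stage_le n
  have h2 := lt_tri_stage_succ n
  have h3 : tri (stage n + 1) = tri (stage n) + (stage n + 1) := rfl
  rw [coordAt]; omega

lemma eq_tri_add_coordAt (n : ℕ) : n = tri (stage n) + coordAt n := by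
  have := tri_stage_le n; rw [coordAt]; omega

/-- `Nat.nth` of the range of a strictly monotone function. -/
lemma nth_range {u : ℕ → ℕ} (hu : StrictMono u) {p : ℕ → Prop}
    (hp : ∀ m, p m ↔ ∃ t, u t = m) : ∀ n, Nat.nth p n = u n := by
  intro n
  induction n using Nat.strong_induction_on with
  | _ n IH =>
    rw [Nat.nth_eq_sInf]
    apply IsLeast.csInf_eq
    constructor
    · exact ⟨(hp _).mpr ⟨n, rfl⟩, fun k hk => by rw [IH k hk]; exact hu hk⟩
    · rintro x ⟨hx, hlt⟩
      obtain ⟨t, rfl⟩ := (hp x).mp hx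
      rcases lt_or_ge t n with h | h
      · have := hlt t h
        rw [IH t h] at this
        exact absurd this (lt_irrefl _)
      · exact hu.monotone h

lemma infinite_of_range {u : ℕ → ℕ} (hu : StrictMono u) {p : ℕ → Prop}
    (hp : ∀ m, p m ↔ ∃ t, u t = m) : (setOf p).Infinite := by
  have h : setOf p = Set.range u := Set.ext fun m => (hp m).trans Iff.rfl
  rw [h]
  exact Set.infinite_range_of_injective hu.injective

/-- ONE's "big value" function. -/
def bigA : ℕ → List (ℕ → ℕ) → ℕ
  | 0, _ => 1
  | n + 1, L => bigA n L + bigA n (L.take n) + (L.getD n (fun _ => 0)) (coordAt n) + 1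

lemma bigA_pos : ∀ n L, 1 ≤ bigA n L
  | 0, _ => le_refl 1
  | n + 1, L => by have := bigA_pos n L; simp only [bigA]; omega

lemma bigA_mono {k n : ℕ} (h : k ≤ n) (L : List (ℕ → ℕ)) :
    bigA k L ≤ bigA n L := by
  induction n with
  | zero => simp [Nat.le_zero.mp h]
  | succ m ih =>
    rcases Nat.eq_or_lt_of_le h with rfl | h'
    · rfl
    · have := ih (Nat.lt_succ_iff.mp h')
      simp only [bigA]; omega

lemma bigA_key {k n : ℕ} (h : k < n) (L : List (ℕ → ℕ)) :
    bigA k (L.take k) + (L.getD k (fun _ => 0)) (coordAt k) < bigA n L := by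
  have h1 : bigA (k + 1) L ≤ bigA n L := bigA_mono h L
  simp only [bigA] at h1
  omega

lemma T_take (F : ℕ → ℕ → ℕ) {k n : ℕ} (h : k ≤ n) :
    (List.ofFn fun m : Fin n => F (2 * (m : ℕ) + 1)).take k
      = List.ofFn fun m : Fin k => F (2 * (m : ℕ) + 1) := by
  apply List.ext_getElem
  · simp; omega
  · intro m h1 h2
    simp [List.getElem_take, List.getElem_ofFn]

lemma T_getD (F : ℕ → ℕ → ℕ) {k n : ℕ} (h : k < n) :
    (List.ofFn fun m : Fin n => F (2 * (m : ℕ) + 1)).getD k (fun _ => 0)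
      = F (2 * k + 1) := by
  rw [List.getD_eq_getElem _ _ (by simpa using h)]
  simp

/-- ONE's strategy. -/
def oneStrat (L : List (ℕ → ℕ)) : ℕ → ℕ :=
  fun i => if i = coordAt L.length then bigA L.length L else 0

/-- Lemma (paper Lemma 30): there is a strategy `σ` for ONE in the game structure `G^ω`
such that for every play `F` following `σ`, the sets `B^F_i` and `B^F_j` are interlaced
for all `i ≠ j`. -/
theorem statement_15 :
    ∃ σ : List (ℕ → ℕ) → ℕ → ℕ, ∀ F : ℕ → ℕ → ℕ, OneFollows σ F →
      ∀ i j : ℕ, i ≠ j → Interlaced (BF F i) (BF F j) := by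
  refine ⟨oneStrat, ?_⟩
  intro F hF i j hij
  set T : ℕ → List (ℕ → ℕ) := fun n => List.ofFn fun m : Fin n => F (2 * (m : ℕ) + 1)
    with hTdef
  have hlen : ∀ n, (T n).length = n := fun n => by simp [hTdef]
  set s : ℕ → ℕ := fun n => bigA n (T n) + F (2 * n + 1) (coordAt n) with hsdef
  have hv : ∀ n i', F (2 * n) i' = if i' = coordAt n then bigA n (T n) else 0 := by
    intro n i'
    rw [hF n]
    simp only [oneStrat, hlen, hTdef, List.length_ofFn]
  have hsmono : StrictMono s := by
    intro k n h
    have hk := bigA_key h (T n)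
    rw [show (T n).take k = T k from T_take F h.le,
      show (T n).getD k (fun _ => 0) = F (2 * k + 1) from T_getD F h] at hk
    have h2 : bigA n (T n) ≤ s n := Nat.le_add_right _ _
    simp only [hsdef]
    omega
  have hBF : ∀ (i' : ℕ) (m : ℕ), m ∈ BF F i' ↔ ∃ k, i' ≤ k ∧ s (tri k + i') = m := by
    intro i' m
    constructor
    · rintro ⟨n, hpos, rfl⟩
      rw [hv] at hpos
      by_cases hc : i' = coordAt n
      · refine ⟨stage n, hc ▸ coordAt_le_stage n, ?_⟩
        rw [hc, ← eq_tri_add_coordAt n]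
        simp [hsdef, hv]
      · simp [hc] at hpos
    · rintro ⟨k, hik, rfl⟩
      refine ⟨tri k + i', ?_, ?_⟩
      · rw [hv, if_pos (coordAt_spec hik).symm]
        exact bigA_pos _ _
      · rw [hv, if_pos (coordAt_spec hik).symm, hsdef]
        simp only [coordAt_spec hik]
  have tri_succ : ∀ m : ℕ, tri (m + 1) = tri m + (m + 1) := fun m => rfl
  -- Infiniteness of each `BF F i'`
  have hinf : ∀ i' : ℕ, (BF F i').Infinite := by
    intro i'
    have hu : StrictMono fun t => s (tri (i' + t) + i') := by
      intro a b h
      exact hsmono (by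
        have := tri_strictMono (show i' + a < i' + b by omega)
        omega)
    exact infinite_of_range hu fun m =>
      (hBF i' m).trans
        ⟨fun ⟨k, hik, h⟩ => ⟨k - i', by rw [show i' + (k - i') = k by omega]; exact h⟩,
         fun ⟨t, h⟩ => ⟨i' + t, by omega, h⟩⟩
  refine ⟨hinf i, hinf j, ?_⟩
  rcases Nat.lt_or_ge i j with hlt | hge
  · -- case i < j
    refine ⟨s (tri j + i), fun n => ?_⟩
    have hua : StrictMono fun t => s (tri (j + t) + i) := fun a b h =>
      hsmono (by have := tri_strictMono (show j + a < j + b by omega); omega)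
    have hub : StrictMono fun t => s (tri (j + t) + j) := fun a b h =>
      hsmono (by have := tri_strictMono (show j + a < j + b by omega); omega)
    have hpa : ∀ m, (m ∈ BF F i ∧ s (tri j + i) ≤ m) ↔ ∃ t, s (tri (j + t) + i) = m := by
      intro m
      constructor
      · rintro ⟨hm, hK⟩
        obtain ⟨k, hik, rfl⟩ := (hBF i m).mp hm
        have h1 : tri j + i ≤ tri k + i := hsmono.le_iff_le.mp hK
        have h2 : j ≤ k := tri_strictMono.le_iff_le.mp (by omega)
        exact ⟨k - j, by rw [show j + (k - j) = k by omega]⟩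
      · rintro ⟨t, rfl⟩
        refine ⟨(hBF i _).mpr ⟨j + t, by omega, rfl⟩, hsmono.monotone ?_⟩
        have := tri_strictMono.monotone (show j ≤ j + t by omega)
        omega
    have hpb : ∀ m, (m ∈ BF F j ∧ s (tri j + i) ≤ m) ↔ ∃ t, s (tri (j + t) + j) = m := by
      intro m
      constructor
      · rintro ⟨hm, hK⟩
        obtain ⟨k, hjk, rfl⟩ := (hBF j m).mp hm
        exact ⟨k - j, by rw [show j + (k - j) = k by omega]⟩
      · rintro ⟨t, rfl⟩
        refine ⟨(hBF j _).mpr ⟨j + t, by omega, rfl⟩, hsmono.monotone ?_⟩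
        have := tri_strictMono.monotone (show j ≤ j + t by omega)
        omega
    rw [nth_range hua hpa n, nth_range hub hpb n, nth_range hua hpa (n + 1)]
    constructor
    · exact hsmono (by omega)
    · refine hsmono ?_
      have := tri_succ (j + n)
      rw [show j + (n + 1) = (j + n) + 1 by omega]
      omega
  · -- case j < i
    have hlt : j < i := by omega
    refine ⟨s (tri i + i), fun n => ?_⟩
    have hua : StrictMono fun t => s (tri (i + t) + i) := fun a b h =>
      hsmono (by have := tri_strictMono (show i + a < i + b by omega); omega)
    have hub : StrictMono fun t => s (tri (i + t + 1) + j) := fun a b h =>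
      hsmono (by have := tri_strictMono (show i + a + 1 < i + b + 1 by omega); omega)
    have hpa : ∀ m, (m ∈ BF F i ∧ s (tri i + i) ≤ m) ↔ ∃ t, s (tri (i + t) + i) = m := by
      intro m
      constructor
      · rintro ⟨hm, hK⟩
        obtain ⟨k, hik, rfl⟩ := (hBF i m).mp hm
        exact ⟨k - i, by rw [show i + (k - i) = k by omega]⟩
      · rintro ⟨t, rfl⟩
        refine ⟨(hBF i _).mpr ⟨i + t, by omega, rfl⟩, hsmono.monotone ?_⟩
        have := tri_strictMono.monotone (show i ≤ i + t by omega)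
        omega
    have hpb : ∀ m, (m ∈ BF F j ∧ s (tri i + i) ≤ m) ↔ ∃ t, s (tri (i + t + 1) + j) = m := by
      intro m
      constructor
      · rintro ⟨hm, hK⟩
        obtain ⟨k, hjk, rfl⟩ := (hBF j m).mp hm
        have h1 : tri i + i ≤ tri k + j := hsmono.le_iff_le.mp hK
        have h2 : i + 1 ≤ k := by
          by_contra hcon
          push_neg at hcon
          have := tri_strictMono.monotone (show k ≤ i by omega)
          omega
        refine ⟨k - (i + 1), by rw [show i + (k - (i + 1)) + 1 = k by omega]⟩
      · rintro ⟨t, rfl⟩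
        refine ⟨(hBF j _).mpr ⟨i + t + 1, by omega, rfl⟩, hsmono.monotone ?_⟩
        have h1 := tri_strictMono.monotone (show i + 1 ≤ i + t + 1 by omega)
        have h2 := tri_succ i
        omega
    rw [nth_range hua hpa n, nth_range hub hpb n, nth_range hua hpa (n + 1)]
    constructor
    · refine hsmono ?_
      have := tri_succ (i + n)
      omega
    · exact hsmono (by
        rw [show i + (n + 1) = i + n + 1 by omega]
        omega)

end GamePaper
end
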